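/- arXiv:2303.01841 — 3 statements merged into one kernel-verified Lean document; each statement's English description precedes it below -/
import Mathlib

section
/- In the piecewise setting on [−1,1], for every integer n ≥ 1 the Legendre coefficient decomposes as c_n = A_n + B_n, where A_n = −(1/(2√(2n+1)))·Σ_{i=1}^{K+1} ∫_{b_{i−1}}^{b_i} g_i'(y)·(P_{n+1}(y) − P_{n−1}(y)) dy and B_n = (1/(2√(2n+1)))·Σ_{i=1}^{K} (g_i(b_i) − g_{i+1}(b_i))·(P_{n+1}(b_i) − P_{n−1}(b_i)). -/
open MeasureTheory Set

noncomputable def legendreP (n : ℕ) (y : ℝ) : ℝ :=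
  (1 / ((2 : ℝ) ^ n * (n.factorial : ℝ))) *
    iteratedDeriv n (fun x : ℝ => (x ^ 2 - 1) ^ n) y

noncomputable def hzeta (s a : ℝ) : ℝ := ∑' k : ℕ, ((k : ℝ) + a) ^ (-s)

noncomputable def legCoeff (g : ℝ → ℝ) (n : ℕ) : ℝ :=
  (Real.sqrt (2 * (n : ℝ) + 1) / 2) * ∫ y in (-1 : ℝ)..1, g y * legendreP n y

noncomputable def Aterm (K : ℕ) (b : ℕ → ℝ) (G : ℕ → ℝ → ℝ) (n : ℕ) : ℝ :=
  -(1 / (2 * Real.sqrt (2 * (n : ℝ) + 1))) *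
    ∑ i ∈ Finset.range (K + 1),
      ∫ y in (b i)..(b (i + 1)),
        derivWithin (G i) (Set.Icc (b i) (b (i + 1))) y *
          (legendreP (n + 1) y - legendreP (n - 1) y)

noncomputable def Bterm (K : ℕ) (b : ℕ → ℝ) (G : ℕ → ℝ → ℝ) (n : ℕ) : ℝ :=
  (1 / (2 * Real.sqrt (2 * (n : ℝ) + 1))) *
    ∑ i ∈ Finset.Icc 1 K,
      (G (i - 1) (b i) - G i (b i)) *
        (legendreP (n + 1) (b i) - legendreP (n - 1) (b i))

noncomputable def jumpSum (K : ℕ) (b : ℕ → ℝ) (G : ℕ → ℝ → ℝ) : ℝ :=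
  ∑ i ∈ Finset.Icc 1 K, |G i (b i) - G (i - 1) (b i)|

section LegendrePoly

open Polynomial

noncomputable def upoly (n : ℕ) : Polynomial ℝ := ((X:ℝ[X])^2 - 1)^n
noncomputable def Lpoly (n : ℕ) : ℝ[X] :=
  C (1/(2^n * (n.factorial:ℝ))) * derivative^[n] (upoly n)

lemma iter_deriv_add (k : ℕ) (p q : ℝ[X]) :
    derivative^[k] (p + q) = derivative^[k] p + derivative^[k] q := by
  induction k generalizing p q with
  | zero => simp
  | succ k ih => simp [Function.iterate_succ_apply, ih]

lemma iter_deriv_X_mul (k : ℕ) (p : ℝ[X]) :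
    derivative^[k] (X * p) = X * derivative^[k] p + (k : ℝ[X]) * derivative^[k-1] p := by
  induction k generalizing p with
  | zero => simp
  | succ k ih =>
    rw [Function.iterate_succ_apply, derivative_mul, derivative_X, one_mul, iter_deriv_add,
      Function.iterate_succ_apply]
    cases k with
    | zero => simp [add_comm]
    | succ j =>
      rw [ih (derivative p)]
      simp only [Nat.succ_sub_one, ← Function.iterate_succ_apply]
      push_cast
      ring

lemma hder2lem : derivative ((X:ℝ[X])^2 - 1) = 2 * X := by
  rw [derivative_sub, derivative_one, derivative_sq, derivative_X, map_ofNat]; ring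

lemma keyF (m : ℕ) (k : ℕ) :
    ((X:ℝ[X])^2 - 1) * derivative^[k+1] (upoly m) =
      (2*((m:ℝ[X]) - (k:ℝ[X]))) * (X * derivative^[k] (upoly m)) +
      ((k:ℝ[X]) * (2*(m:ℝ[X]) - (k:ℝ[X]) + 1)) * derivative^[k-1] (upoly m) := by
  induction k with
  | zero =>
    cases m with
    | zero => simp [upoly]
    | succ j =>
      simp only [zero_add, Function.iterate_one, Function.iterate_zero, id_eq]
      rw [upoly, derivative_pow, hder2lem]
      simp only [Nat.succ_sub_one, C_eq_natCast, Nat.cast_zero]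
      push_cast
      ring
  | succ k ih =>
    have h := congrArg derivative ih
    simp only [derivative_mul, derivative_add, hder2lem, derivative_X, mul_one, derivative_sq,
      map_ofNat, derivative_natCast, derivative_one, derivative_sub, derivative_ofNat, zero_mul,
      mul_zero, add_zero, zero_add, sub_zero, zero_sub, ← Function.iterate_succ_apply',
      Nat.succ_eq_add_one] at h
    have hkk : ((k:ℝ[X]) * (2*(m:ℝ[X]) - (k:ℝ[X]) + 1)) * derivative^[(k-1)+1] (upoly m) =
        ((k:ℝ[X]) * (2*(m:ℝ[X]) - (k:ℝ[X]) + 1)) * derivative^[k] (upoly m) := by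
      cases k with
      | zero => simp
      | succ j => rw [Nat.succ_sub_one]
    rw [hkk] at h
    push_cast
    push_cast at h
    linear_combination h

lemma deriv_upoly (m : ℕ) :
    derivative (upoly (m+1)) = (2*(m:ℝ[X])+2) * (X * upoly m) := by
  rw [upoly, upoly, derivative_pow, hder2lem, Nat.succ_sub_one, C_eq_natCast]
  push_cast; ring

lemma natpoly_eq_C (m : ℕ) : (2*(m:ℝ[X])+2) = C (2*(m:ℝ)+2) := by
  simp [map_add, map_mul, map_ofNat, C_eq_natCast]

lemma iterD_mul_upoly (m k : ℕ) :
    derivative^[k] ((2*(m:ℝ[X])+2) * (X * upoly m)) =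
      (2*(m:ℝ[X])+2) * (X * derivative^[k] (upoly m) + (k:ℝ[X]) * derivative^[k-1] (upoly m)) := by
  rw [natpoly_eq_C, iterate_derivative_C_mul, iter_deriv_X_mul, mul_add]

lemma key2 (m : ℕ) : X * derivative^[m+2] (upoly (m+1)) =
    ((m:ℝ[X])+1) * derivative^[m+1] (upoly (m+1)) + (2*(m:ℝ[X])+2) * derivative^[m+1] (upoly m) := by
  have e1 : derivative^[m+2] (upoly (m+1)) =
      (2*(m:ℝ[X])+2) * (X * derivative^[m+1] (upoly m) + ((m+1:ℕ):ℝ[X]) * derivative^[m] (upoly m)) := by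
    rw [show m+2 = (m+1)+1 from rfl, Function.iterate_succ_apply, deriv_upoly,
      iterD_mul_upoly m (m+1), Nat.add_sub_cancel]
  have e2 : derivative^[m+1] (upoly (m+1)) =
      (2*(m:ℝ[X])+2) * (X * derivative^[m] (upoly m) + ((m:ℕ):ℝ[X]) * derivative^[m-1] (upoly m)) := by
    rw [Function.iterate_succ_apply, deriv_upoly, iterD_mul_upoly m m]
  have e3 := keyF m m
  rw [e1, e2]
  push_cast
  push_cast at e3
  linear_combination (2*(m:ℝ[X])+2) * e3

lemma comb (m : ℕ) : derivative^[m+3] (upoly (m+2)) =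
    (2*(m:ℝ[X])+4) * ((2*(m:ℝ[X])+3) * derivative^[m+1] (upoly (m+1)) +
      (2*(m:ℝ[X])+2) * derivative^[m+1] (upoly m)) := by
  have h0 : derivative^[m+3] (upoly (m+2)) =
      derivative^[m+2] ((2*((m+1:ℕ):ℝ[X])+2) * (X * upoly (m+1))) := by
    rw [show m+3 = (m+2)+1 from rfl, Function.iterate_succ_apply, deriv_upoly]
  rw [h0, iterD_mul_upoly (m+1) (m+2), show m+2-1 = m+1 from rfl, key2 m]
  push_cast
  ring

lemma Lpoly_rec (m : ℕ) : derivative (Lpoly (m+2)) =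
    derivative (Lpoly m) + C (2*(m:ℝ)+3) * Lpoly (m+1) := by
  unfold Lpoly
  rw [derivative_C_mul, derivative_C_mul]
  simp only [← Function.iterate_succ_apply', Nat.succ_eq_add_one]
  rw [show m+2+1 = m+3 from rfl, comb m]
  have h1 : (C (1/(2^(m+2) * ((m+2).factorial:ℝ))) : ℝ[X]) * (2*(m:ℝ[X])+4) =
      C (1/(2^(m+1) * ((m+1).factorial:ℝ))) := by
    have hc : (2*(m:ℝ[X])+4) = C (2*(m:ℝ)+4) := by
      simp [map_add, map_mul, map_ofNat, C_eq_natCast]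
    rw [hc, ← C_mul]
    congr 1
    have h2 : ((m+2).factorial : ℝ) = (m+2) * ((m+1).factorial : ℝ) := by
      rw [Nat.factorial_succ]; push_cast; ring
    have hf : ((m+1).factorial : ℝ) ≠ 0 := Nat.cast_ne_zero.2 (Nat.factorial_ne_zero _)
    rw [h2]
    field_simp
    ring
  have h2 : (C (1/(2^(m+1) * ((m+1).factorial:ℝ))) : ℝ[X]) * (2*(m:ℝ[X])+2) =
      C (1/(2^m * (m.factorial:ℝ))) := by
    have hc : (2*(m:ℝ[X])+2) = C (2*(m:ℝ)+2) := natpoly_eq_C m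
    rw [hc, ← C_mul]
    congr 1
    have h3 : ((m+1).factorial : ℝ) = (m+1) * (m.factorial : ℝ) := by
      rw [Nat.factorial_succ]; push_cast; ring
    have hf : ((m).factorial : ℝ) ≠ 0 := Nat.cast_ne_zero.2 (Nat.factorial_ne_zero _)
    rw [h3]
    field_simp
    ring
  have hc3 : (C (2*(m:ℝ)+3) : ℝ[X]) = 2*(m:ℝ[X])+3 := by
    simp [map_add, map_mul, map_ofNat, C_eq_natCast]
  rw [hc3]
  linear_combination ((2*(m:ℝ[X])+3) * derivative^[m+1] (upoly (m+1)) +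
    (2*(m:ℝ[X])+2) * derivative^[m+1] (upoly m)) * h1 +
    (derivative^[m+1] (upoly m)) * h2

lemma iteratedDeriv_eval (k : ℕ) (p : ℝ[X]) :
    iteratedDeriv k (fun x => p.eval x) = fun x => (derivative^[k] p).eval x := by
  induction k generalizing p with
  | zero => simp
  | succ k ih =>
    have hd : deriv (fun x => p.eval x) = fun x => (derivative p).eval x :=
      funext fun x => Polynomial.deriv _
    rw [iteratedDeriv_succ', hd, ih, Function.iterate_succ_apply]

lemma legendreP_eval (n : ℕ) (y : ℝ) : legendreP n y = (Lpoly n).eval y := by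
  unfold legendreP Lpoly
  have h : (fun x : ℝ => (x^2-1)^n) = fun x => (upoly n).eval x := by
    funext x; simp [upoly]
  rw [h, iteratedDeriv_eval]
  simp

lemma legendreP_continuous (n : ℕ) : Continuous (legendreP n) := by
  have : legendreP n = fun y => (Lpoly n).eval y := funext (legendreP_eval n)
  rw [this]; exact Polynomial.continuous _

lemma eval_one_iter : ∀ n : ℕ, (derivative^[n] (upoly n)).eval 1 = 2^n * (n.factorial:ℝ) := by
  intro n
  have hu : upoly n = ((X:ℝ[X]) + C 1)^n * ((X:ℝ[X]) - C 1)^n := by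
    rw [upoly, ← mul_pow]; congr 1; simp; ring
  rw [hu, Polynomial.iterate_derivative_mul]
  rw [Polynomial.eval_finset_sum]
  rw [Finset.sum_eq_single n]
  · simp only [Nat.choose_self, one_smul, Nat.sub_self, Function.iterate_zero, id_eq]
    rw [Polynomial.iterate_derivative_X_sub_pow_self]
    simp [eval_smul]
    left; norm_num
  · intro k hk hkn
    rw [Polynomial.iterate_derivative_X_sub_pow]
    simp only [eval_smul, eval_mul, eval_pow, eval_sub, eval_X, eval_one, eval_C, smul_eq_mul]
    have : (1:ℝ) - 1 = 0 := by ring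
    rw [this, zero_pow]
    · ring
    · have := Finset.mem_range.1 hk
      omega
  · intro h; exact absurd (Finset.self_mem_range_succ n) h

lemma legendreP_one (n : ℕ) : legendreP n 1 = 1 := by
  rw [legendreP_eval, Lpoly, eval_mul, eval_C, eval_one_iter]
  have h1 : (2:ℝ)^n ≠ 0 := by positivity
  have h2 : ((n.factorial:ℝ)) ≠ 0 := Nat.cast_ne_zero.2 (Nat.factorial_ne_zero _)
  field_simp

lemma legendreP_neg_one (n : ℕ) : legendreP n (-1) = (-1)^n := by
  have hf : (fun x : ℝ => (x^2-1)^n) = (fun x : ℝ => ((-x)^2-1)^n) := by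
    funext x; ring_nf
  have h := iteratedDeriv_comp_neg n (fun x : ℝ => (x^2-1)^n) (-1)
  rw [← hf, neg_neg] at h
  unfold legendreP
  rw [h, smul_eq_mul]
  have h1 := legendreP_one n
  unfold legendreP at h1
  calc 1 / ((2:ℝ) ^ n * (n.factorial:ℝ)) * ((-1) ^ n * iteratedDeriv n (fun x : ℝ => (x ^ 2 - 1) ^ n) 1)
      = (-1)^n * (1 / ((2:ℝ) ^ n * (n.factorial:ℝ)) * iteratedDeriv n (fun x : ℝ => (x ^ 2 - 1) ^ n) 1) := by ring
    _ = (-1)^n := by rw [h1, mul_one]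

lemma Q_hasDerivAt (m : ℕ) (y : ℝ) :
    HasDerivAt (fun z => legendreP (m+2) z - legendreP m z) ((2*(m:ℝ)+3) * legendreP (m+1) y) y := by
  have h := (Lpoly (m+2) - Lpoly m).hasDerivAt y
  have hfun : (fun x => (Lpoly (m+2) - Lpoly m).eval x)
      = fun x => legendreP (m+2) x - legendreP m x := by
    funext x; simp [eval_sub, legendreP_eval]
  have hval : (derivative (Lpoly (m+2) - Lpoly m)).eval y = (2*(m:ℝ)+3) * legendreP (m+1) y := by
    rw [derivative_sub, Lpoly_rec m]
    simp [legendreP_eval]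
  rw [hfun, hval] at h
  exact h

end LegendrePoly

lemma piece_ibp (a c : ℝ) (hac : a < c) (F Q P : ℝ → ℝ) (s : ℝ) (hs : s ≠ 0)
    (hF : ContDiffOn ℝ 1 F (Set.Icc a c)) (hPcont : Continuous P)
    (hQ : ∀ y, HasDerivAt Q (s * P y) y) :
    ∫ y in a..c, F y * P y = (1/s) * (F c * Q c - F a * Q a
      - ∫ y in a..c, derivWithin F (Set.Icc a c) y * Q y) := by
  have hQc : Continuous Q := by
    rw [continuous_iff_continuousAt]; exact fun y => (hQ y).continuousAt
  have hud : UniqueDiffOn ℝ (Set.Icc a c) := uniqueDiffOn_Icc hac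
  have hFc : ContinuousOn F (Set.Icc a c) := hF.continuousOn
  have hF' : ContinuousOn (derivWithin F (Set.Icc a c)) (Set.Icc a c) :=
    hF.continuousOn_derivWithin hud le_rfl
  have hint1 : IntervalIntegrable (fun y => derivWithin F (Set.Icc a c) y * Q y) volume a c :=
    (hF'.mul hQc.continuousOn).intervalIntegrable_of_Icc hac.le
  have hint2 : IntervalIntegrable (fun y => F y * (s * P y)) volume a c :=
    (hFc.mul (continuous_const.mul hPcont).continuousOn).intervalIntegrable_of_Icc hac.le
  have hderiv : ∀ x ∈ Set.Ioo a c, HasDerivWithinAt (fun y => F y * Q y)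
      (derivWithin F (Set.Icc a c) x * Q x + F x * (s * P x)) (Set.Ioi x) x := by
    intro x hx
    have hmem : Set.Icc a c ∈ nhds x := Icc_mem_nhds hx.1 hx.2
    have hdF : HasDerivAt F (derivWithin F (Set.Icc a c) x) x :=
      ((hF.differentiableOn one_ne_zero x (Set.Ioo_subset_Icc_self hx)).hasDerivWithinAt).hasDerivAt hmem
    exact ((hdF.mul (hQ x))).hasDerivWithinAt
  have hcont : ContinuousOn (fun y => F y * Q y) (Set.Icc a c) := hFc.mul hQc.continuousOn
  have hFTC := intervalIntegral.integral_eq_sub_of_hasDeriv_right_of_le hac.le hcont hderiv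
    (hint1.add hint2)
  rw [intervalIntegral.integral_add hint1 hint2] at hFTC
  have hmul : ∫ y in a..c, F y * (s * P y) = s * ∫ y in a..c, F y * P y := by
    rw [← intervalIntegral.integral_const_mul]
    apply intervalIntegral.integral_congr
    intro y _; simp; ring
  rw [hmul] at hFTC
  field_simp
  linarith [hFTC]

/-- in the piecewise setting on [-1,1], for every n ≥ 1 the Legendre
coefficient decomposes as c_n = A_n + B_n. -/
theorem legCoeff_eq_Aterm_add_Bterm
    (K : ℕ) (b : ℕ → ℝ) (L : ℝ) (G : ℕ → ℝ → ℝ) (g : ℝ → ℝ)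
    (hb0 : b 0 = -1) (hbK : b (K + 1) = 1)
    (hbmono : ∀ i ≤ K, b i < b (i + 1))
    (hL : 0 ≤ L)
    (hG : ∀ i ≤ K, ContDiffOn ℝ 1 (G i) (Set.Icc (b i) (b (i + 1))))
    (hGder : ∀ i ≤ K, ∀ y ∈ Set.Icc (b i) (b (i + 1)),
      |derivWithin (G i) (Set.Icc (b i) (b (i + 1))) y| ≤ L)
    (hg1 : ∀ i < K, ∀ y, b i ≤ y → y < b (i + 1) → g y = G i y)
    (hg2 : ∀ y ∈ Set.Icc (b K) (b (K + 1)), g y = G K y)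
    (n : ℕ) (hn : 1 ≤ n) :
    legCoeff g n = Aterm K b G n + Bterm K b G n := by
  obtain ⟨m, rfl⟩ : ∃ m, n = m + 1 := ⟨n - 1, (Nat.succ_pred_eq_of_pos hn).symm⟩
  set P : ℝ → ℝ := legendreP (m+1) with hP
  set Q : ℝ → ℝ := fun z => legendreP (m+2) z - legendreP m z with hQ
  set s : ℝ := 2*(m:ℝ)+3 with hs_def
  have hs_pos : (0:ℝ) < s := by positivity
  have hs : s ≠ 0 := ne_of_gt hs_pos
  have hQd : ∀ y, HasDerivAt Q (s * P y) y := fun y => Q_hasDerivAt m y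
  -- jump identity for interval integrals of g vs G i
  have hIeq : ∀ i ≤ K, (∫ y in (b i)..(b (i+1)), g y * P y)
      = ∫ y in (b i)..(b (i+1)), G i y * P y := by
    intro i hi
    apply intervalIntegral.integral_congr_ae
    have hne : ∀ᵐ (y:ℝ) ∂(volume : Measure ℝ), y ≠ b (i+1) := by
      have hset : {y : ℝ | ¬ y ≠ b (i+1)} = {b (i+1)} := by ext y; simp
      rw [MeasureTheory.ae_iff, hset]; exact measure_singleton _
    filter_upwards [hne] with y hy hmem
    rw [Set.uIoc_of_le (hbmono i hi).le] at hmem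
    have hgy : g y = G i y := by
      by_cases hik : i = K
      · subst hik; exact hg2 y ⟨hmem.1.le, hmem.2⟩
      · exact hg1 i (lt_of_le_of_ne hi hik) y hmem.1.le (lt_of_le_of_ne hmem.2 hy)
    rw [hgy]
  have hGint : ∀ i ≤ K, IntervalIntegrable (fun y => G i y * P y) volume (b i) (b (i+1)) :=
    fun i hi => ((hG i hi).continuousOn.mul (legendreP_continuous (m+1)).continuousOn).intervalIntegrable_of_Icc (hbmono i hi).le
  have hgint : ∀ i ≤ K, IntervalIntegrable (fun y => g y * P y) volume (b i) (b (i+1)) := by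
    intro i hi
    have h1 := hGint i hi
    have hae : ∀ᵐ y ∂(volume : Measure ℝ), y ∈ Set.uIoc (b i) (b (i+1)) →
        G i y * P y = g y * P y := by
      have hne : ∀ᵐ (y:ℝ) ∂(volume : Measure ℝ), y ≠ b (i+1) := by
        have hset : {y : ℝ | ¬ y ≠ b (i+1)} = {b (i+1)} := by ext y; simp
        rw [MeasureTheory.ae_iff, hset]; exact measure_singleton _
      filter_upwards [hne] with y hy hmem
      rw [Set.uIoc_of_le (hbmono i hi).le] at hmem
      have hgy : g y = G i y := by
        by_cases hik : i = K
        · subst hik; exact hg2 y ⟨hmem.1.le, hmem.2⟩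
        · exact hg1 i (lt_of_le_of_ne hi hik) y hmem.1.le (lt_of_le_of_ne hmem.2 hy)
      rw [hgy]
    rw [intervalIntegrable_iff] at h1 ⊢
    exact h1.congr ((ae_restrict_iff' measurableSet_uIoc).2 hae)
  have hsplit : (∫ y in (-1:ℝ)..1, g y * P y)
      = ∑ i ∈ Finset.range (K+1), ∫ y in (b i)..(b (i+1)), g y * P y := by
    rw [← hb0, ← hbK]
    exact (intervalIntegral.sum_integral_adjacent_intervals
      (fun k hk => hgint k (Nat.lt_succ_iff.mp hk))).symm
  -- per-piece integration by parts
  have hpiece : ∀ i ≤ K, (∫ y in (b i)..(b (i+1)), G i y * P y)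
      = (1/s) * (G i (b (i+1)) * Q (b (i+1)) - G i (b i) * Q (b i)
        - ∫ y in (b i)..(b (i+1)), derivWithin (G i) (Set.Icc (b i) (b (i+1))) y * Q y) :=
    fun i hi => piece_ibp (b i) (b (i+1)) (hbmono i hi) (G i) Q P s hs (hG i hi)
      (legendreP_continuous (m+1)) hQd
  -- boundary values of Q
  have hQtop : Q (b (K+1)) = 0 := by
    rw [hQ]; simp only [hbK, legendreP_one]; ring
  have hQbot : Q (b 0) = 0 := by
    rw [hQ]; simp only [hb0, legendreP_neg_one]; ring
  -- telescoping
  have hT : (∑ i ∈ Finset.range (K+1),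
        (G i (b (i+1)) * Q (b (i+1)) - G i (b i) * Q (b i)))
      = ∑ i ∈ Finset.Icc 1 K, (G (i-1) (b i) - G i (b i)) * Q (b i) := by
    have hterm : ∀ i, G i (b (i+1)) * Q (b (i+1)) - G i (b i) * Q (b i)
        = (G ((i+1)-1) (b (i+1)) - G (i+1) (b (i+1))) * Q (b (i+1))
          + (G (i+1) (b (i+1)) * Q (b (i+1)) - G i (b i) * Q (b i)) := by
      intro i; simp only [Nat.add_sub_cancel]; ring
    rw [Finset.sum_congr rfl (fun i _ => hterm i), Finset.sum_add_distrib,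
      Finset.sum_range_sub (fun i => G i (b i) * Q (b i)) (K+1), hQtop, hQbot]
    have hlast : ∑ i ∈ Finset.range (K+1),
        (G ((i+1)-1) (b (i+1)) - G (i+1) (b (i+1))) * Q (b (i+1))
        = ∑ i ∈ Finset.range K, (G ((i+1)-1) (b (i+1)) - G (i+1) (b (i+1))) * Q (b (i+1)) := by
      rw [Finset.sum_range_succ, hQtop, mul_zero, add_zero]
    rw [hlast]
    simp only [mul_zero, zero_mul, sub_self, add_zero]
    have hre : ∑ i ∈ Finset.Icc 1 K, (G (i-1) (b i) - G i (b i)) * Q (b i)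
        = ∑ i ∈ Finset.range K, (G ((1+i)-1) (b (1+i)) - G (1+i) (b (1+i))) * Q (b (1+i)) := by
      rw [show Finset.Icc 1 K = Finset.Ico 1 (K+1) from by rw [Finset.Ico_add_one_right_eq_Icc],
        Finset.sum_Ico_eq_sum_range]
      simp only [Nat.add_sub_cancel]
    rw [hre]
    apply Finset.sum_congr rfl
    intro i _
    rw [add_comm 1 i]
  -- assemble
  have hsq : Real.sqrt (2*((m+1:ℕ):ℝ)+1) * Real.sqrt (2*((m+1:ℕ):ℝ)+1) = s := by
    rw [Real.mul_self_sqrt (by positivity)]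
    push_cast; ring
  have hsqpos : 0 < Real.sqrt (2*((m+1:ℕ):ℝ)+1) := by
    apply Real.sqrt_pos.2; positivity
  have hQapp : ∀ z, legendreP (m+1+1) z - legendreP (m+1-1) z = Q z := by
    intro z; rw [hQ]; norm_num
  rw [legCoeff, Aterm, Bterm]
  simp only [← hP, hQapp]
  rw [hsplit, Finset.sum_congr rfl (fun i hi => (hIeq i (Nat.lt_succ_iff.mp (Finset.mem_range.mp hi)))),
    Finset.sum_congr rfl (fun i hi => hpiece i (Nat.lt_succ_iff.mp (Finset.mem_range.mp hi)))]
  have hdist : ∑ i ∈ Finset.range (K+1), (1/s) * (G i (b (i+1)) * Q (b (i+1)) - G i (b i) * Q (b i)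
        - ∫ y in (b i)..(b (i+1)), derivWithin (G i) (Set.Icc (b i) (b (i+1))) y * Q y)
      = (1/s) * ((∑ i ∈ Finset.range (K+1), (G i (b (i+1)) * Q (b (i+1)) - G i (b i) * Q (b i)))
        - ∑ i ∈ Finset.range (K+1), ∫ y in (b i)..(b (i+1)),
            derivWithin (G i) (Set.Icc (b i) (b (i+1))) y * Q y) := by
    rw [← Finset.sum_sub_distrib, Finset.mul_sum]
  rw [hdist, hT]
  have h2sq : Real.sqrt (2*((m+1:ℕ):ℝ)+1) ≠ 0 := ne_of_gt hsqpos
  have hfinal : Real.sqrt (2*((m+1:ℕ):ℝ)+1)/2 * (1/s) = 1/(2*Real.sqrt (2*((m+1:ℕ):ℝ)+1)) := by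
    rw [← hsq]
    field_simp
  set SB := ∑ i ∈ Finset.Icc 1 K, (G (i-1) (b i) - G i (b i)) * Q (b i) with hSB
  set SJ := ∑ i ∈ Finset.range (K+1), ∫ y in (b i)..(b (i+1)),
      derivWithin (G i) (Set.Icc (b i) (b (i+1))) y * Q y with hSJ
  calc Real.sqrt (2*((m+1:ℕ):ℝ)+1)/2 * ((1/s) * (SB - SJ))
      = (Real.sqrt (2*((m+1:ℕ):ℝ)+1)/2 * (1/s)) * (SB - SJ) := by ring
    _ = (1/(2*Real.sqrt (2*((m+1:ℕ):ℝ)+1))) * (SB - SJ) := by rw [hfinal]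
    _ = -(1/(2*Real.sqrt (2*((m+1:ℕ):ℝ)+1))) * SJ + (1/(2*Real.sqrt (2*((m+1:ℕ):ℝ)+1))) * SB := by
        ring
end

section
/- In the piecewise setting on [−1,1], for every integer n ≥ 1 the integral term A_n = −(1/(2√(2n+1)))·Σ_{i=1}^{K+1} ∫_{b_{i−1}}^{b_i} g_i'(y)·(P_{n+1}(y) − P_{n−1}(y)) dy satisfies |A_n| ≤ (L·(K+1)/√(2n+1))·√(1/(2n+3) + 1/(2n−1)). -/
open MeasureTheory Set

open Polynomial intervalIntegral

noncomputable def legP (n : ℕ) : Polynomial ℝ :=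
  Polynomial.C (1 / ((2:ℝ)^n * (n.factorial : ℝ))) *
    (Polynomial.derivative^[n] ((Polynomial.X^2 - 1)^n))

lemma iteratedDeriv_polyeval (p : Polynomial ℝ) (n : ℕ) :
    iteratedDeriv n (fun x => p.eval x) = fun y => (Polynomial.derivative^[n] p).eval y := by
  induction n with
  | zero => simp
  | succ n ih =>
    rw [iteratedDeriv_succ, ih]
    funext y
    rw [Function.iterate_succ_apply']
    exact Polynomial.deriv _

lemma legendreP_eq (n : ℕ) (y : ℝ) : legendreP n y = (legP n).eval y := by
  have : (fun x : ℝ => (x ^ 2 - 1) ^ n) = fun x => ((X^2 - 1 : Polynomial ℝ)^n).eval x := by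
    funext x; simp
  rw [legendreP, this, iteratedDeriv_polyeval, legP]
  simp [mul_comm]


lemma poly_intble (p : Polynomial ℝ) (a b : ℝ) :
    IntervalIntegrable (fun y => p.eval y) volume a b :=
  p.continuous_aeval.intervalIntegrable a b

lemma poly_ibp (p q : Polynomial ℝ) (a b : ℝ) :
    ∫ y in a..b, p.eval y * (derivative q).eval y =
      p.eval b * q.eval b - p.eval a * q.eval a -
        ∫ y in a..b, (derivative p).eval y * q.eval y := by
  rw [integral_mul_deriv_eq_deriv_mul (u := fun y => p.eval y) (v := fun y => q.eval y)
    (u' := fun y => (derivative p).eval y) (v' := fun y => (derivative q).eval y)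
    (fun x _ => p.hasDerivAt x) (fun x _ => q.hasDerivAt x)
    (poly_intble _ a b) (poly_intble _ a b)]

lemma poly_ftc (p : Polynomial ℝ) (a b : ℝ) :
    ∫ y in a..b, (derivative p).eval y = p.eval b - p.eval a := by
  exact integral_eq_sub_of_hasDerivAt (fun x _ => p.hasDerivAt x) (poly_intble _ a b)

lemma deriv_sq_sub_one : derivative (X^2 - 1 : Polynomial ℝ) = C 2 * X := by
  rw [derivative_sub, derivative_one, derivative_X_pow]
  simp

/-- `D^[m] ((X²-1)^(m+k) * r)` is divisible by `(X²-1)^k`. -/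
lemma vanish_aux (m : ℕ) : ∀ (k : ℕ) (r : Polynomial ℝ),
    ∃ q : Polynomial ℝ, derivative^[m] ((X^2 - 1)^(m+k) * r) = (X^2 - 1)^k * q := by
  induction m with
  | zero => intro k r; exact ⟨r, by simp⟩
  | succ m ih =>
    intro k r
    have hd : derivative ((X^2 - 1 : Polynomial ℝ)^(m+1+k) * r)
        = (X^2 - 1)^(m+k) * (C ((m+1+k : ℕ) : ℝ) * (C 2 * X) * r + (X^2-1) * derivative r) := by
      rw [derivative_mul, derivative_pow, deriv_sq_sub_one]
      have h1 : (m+1+k) - 1 = m + k := by omega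
      have h2 : m + 1 + k = (m + k) + 1 := by omega
      rw [h1, h2, pow_succ]
      ring
    obtain ⟨q, hq⟩ := ih k (C ((m+1+k : ℕ) : ℝ) * (C 2 * X) * r + (X^2-1) * derivative r)
    refine ⟨q, ?_⟩
    have h3 : m + 1 + k = (m + k) + 1 := by omega
    rw [Function.iterate_succ_apply, hd, hq]

lemma vanish_eval (n m : ℕ) (hm : m < n) (y : ℝ) (hy : y^2 = 1) :
    (derivative^[m] ((X^2 - 1 : Polynomial ℝ)^n)).eval y = 0 := by
  obtain ⟨k, hk⟩ : ∃ k, n = m + (k+1) := ⟨n - m - 1, by omega⟩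
  obtain ⟨q, hq⟩ := vanish_aux m (k+1) (1 : Polynomial ℝ)
  rw [hk, show (X^2-1 : Polynomial ℝ)^(m+(k+1)) = (X^2-1)^(m+(k+1)) * 1 by ring, hq]
  simp [hy]
/-- Iterated integration by parts against the Rodrigues kernel. -/
lemma key_ibp (n : ℕ) (q : Polynomial ℝ) : ∀ k ≤ n,
    ∫ y in (-1:ℝ)..1, (derivative^[n] ((X^2-1)^n)).eval y * q.eval y
    = (-1:ℝ)^k * ∫ y in (-1:ℝ)..1,
        (derivative^[n-k] ((X^2-1 : Polynomial ℝ)^n)).eval y * (derivative^[k] q).eval y := by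
  intro k hk
  induction k with
  | zero => simp
  | succ k ih =>
    rw [ih (by omega)]
    have h1 : n - k = (n - (k+1)) + 1 := by omega
    set P : Polynomial ℝ := derivative^[n - (k+1)] ((X^2-1)^n) with hP
    have h2 : derivative^[n-k] ((X^2-1 : Polynomial ℝ)^n) = derivative P := by
      rw [h1, Function.iterate_succ_apply']
    have hcomm : ∫ y in (-1:ℝ)..1, (derivative P).eval y * (derivative^[k] q).eval y
        = ∫ y in (-1:ℝ)..1, (derivative^[k] q).eval y * (derivative P).eval y := by
      simp [mul_comm]
    have hb1 : P.eval 1 = 0 := vanish_eval n _ (by omega) 1 (by norm_num)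
    have hb2 : P.eval (-1) = 0 := vanish_eval n _ (by omega) (-1) (by norm_num)
    rw [h2, hcomm, poly_ibp, hb1, hb2]
    rw [Function.iterate_succ_apply']
    have : ∫ y in (-1:ℝ)..1, (derivative (derivative^[k] q)).eval y * P.eval y
        = ∫ y in (-1:ℝ)..1, P.eval y * (derivative (derivative^[k] q)).eval y := by
      simp [mul_comm]
    rw [this]
    ring_nf

lemma natDegree_sq_sub_one_pow (n : ℕ) :
    ((X^2 - 1 : Polynomial ℝ)^n).natDegree = 2 * n := by
  have h : (X^2 - 1 : Polynomial ℝ).natDegree = 2 := by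
    compute_degree!
  rw [natDegree_pow, h, mul_comm]

lemma monic_sq_sub_one_pow (n : ℕ) : ((X^2 - 1 : Polynomial ℝ)^n).Monic := by
  apply Polynomial.Monic.pow
  have : (X^2 - 1 : Polynomial ℝ) = X^2 + C (-1) := by simp [sub_eq_add_neg]
  rw [this]
  exact monic_X_pow_add_C _ (by norm_num)

/-- top iterated derivative is the constant (2n)!. -/
lemma top_deriv (n : ℕ) :
    derivative^[2*n] ((X^2 - 1 : Polynomial ℝ)^n) = C (((2*n).factorial : ℝ)) := by
  set p := (X^2 - 1 : Polynomial ℝ)^n with hp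
  have hdeg : (derivative^[2*n] p).natDegree ≤ 0 := by
    have := natDegree_iterate_derivative p (2*n)
    rw [natDegree_sq_sub_one_pow] at this
    omega
  have heq : derivative^[2*n] p = C ((derivative^[2*n] p).coeff 0) :=
    (Polynomial.eq_C_of_natDegree_le_zero hdeg)
  rw [heq, coeff_iterate_derivative]
  congr 1
  have : p.coeff (0 + 2*n) = 1 := by
    rw [zero_add]
    have := (monic_sq_sub_one_pow n)
    have hd := natDegree_sq_sub_one_pow n
    rw [Polynomial.Monic] at this
    rw [← hd]
    exact this
  rw [this, Nat.zero_add, Nat.descFactorial_self]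
  simp
lemma deriv_one_sub_sq : derivative (1 - X^2 : Polynomial ℝ) = -(C 2 * X) := by
  rw [show (1 - X^2 : Polynomial ℝ) = -(X^2 - 1) by ring, derivative_neg, deriv_sq_sub_one]

lemma J_rec_poly (m : ℕ) :
    derivative (X * (1 - X^2)^(m+1) : Polynomial ℝ)
      = ((2*m+3 : ℕ) : Polynomial ℝ) * (1-X^2)^(m+1) - ((2*m+2 : ℕ) : Polynomial ℝ) * (1-X^2)^m := by
  rw [derivative_mul, derivative_pow, deriv_one_sub_sq, derivative_X]
  simp only [Nat.add_sub_cancel, C_eq_natCast, map_ofNat]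
  push_cast
  ring

lemma J_rec (m : ℕ) :
    (2*(m:ℝ)+3) * ∫ y in (-1:ℝ)..1, (1-y^2)^(m+1)
      = (2*(m:ℝ)+2) * ∫ y in (-1:ℝ)..1, (1-y^2)^m := by
  have h0 : ∫ y in (-1:ℝ)..1, (derivative (X * (1 - X^2)^(m+1) : Polynomial ℝ)).eval y = 0 := by
    rw [poly_ftc]; norm_num
  rw [J_rec_poly] at h0
  simp only [eval_sub, eval_mul, eval_natCast, eval_pow, eval_one, eval_X] at h0
  rw [intervalIntegral.integral_sub (f := fun y : ℝ => ((2*m+3 : ℕ) : ℝ) * (1-y^2)^(m+1))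
      (g := fun y : ℝ => ((2*m+2 : ℕ) : ℝ) * (1-y^2)^m)
      (Continuous.intervalIntegrable (by fun_prop) _ _)
      (Continuous.intervalIntegrable (by fun_prop) _ _),
    intervalIntegral.integral_const_mul, intervalIntegral.integral_const_mul] at h0
  push_cast at h0
  linarith

lemma J_val : ∀ m : ℕ, ∫ y in (-1:ℝ)..1, (1-y^2)^m
    = 2^(2*m+1) * ((m.factorial : ℝ))^2 / (((2*m+1).factorial : ℝ)) := by
  intro m
  induction m with
  | zero => norm_num
  | succ m ih =>
    have hrec := J_rec m
    rw [ih] at hrec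
    have h3 : (2*(m:ℝ)+3) ≠ 0 := by positivity
    have hfac : (((2*(m+1)+1).factorial : ℝ)) = (2*(m:ℝ)+3) * (2*(m:ℝ)+2) * (((2*m+1).factorial : ℝ)) := by
      have : 2*(m+1)+1 = (2*m+1) + 1 + 1 := by omega
      rw [this, Nat.factorial_succ, Nat.factorial_succ]
      push_cast
      ring
    have hfacpos : (0:ℝ) < ((2*m+1).factorial : ℝ) := by positivity
    have : ∫ y in (-1:ℝ)..1, (1-y^2)^(m+1)
        = (2*(m:ℝ)+2) * (2^(2*m+1) * ((m.factorial : ℝ))^2 / (((2*m+1).factorial : ℝ))) / (2*(m:ℝ)+3) := by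
      field_simp at hrec ⊢
      linarith
    have hfm : (((m+1).factorial : ℝ)) = ((m:ℝ)+1) * (m.factorial : ℝ) := by
      rw [Nat.factorial_succ]; push_cast; ring
    have hpw : (2:ℝ)^(2*(m+1)+1) = 4 * 2^(2*m+1) := by
      rw [show 2*(m+1)+1 = (2*m+1)+2 by omega, pow_add]; ring
    rw [this, hfac, hfm, hpw]
    field_simp
    ring

lemma legP_sq_int (m : ℕ) :
    ∫ y in (-1:ℝ)..1, (legP m).eval y * (legP m).eval y = 2 / (2*(m:ℝ)+1) := by
  have hc : ∀ y : ℝ, (legP m).eval y * (legP m).eval y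
      = (1 / ((2:ℝ)^m * (m.factorial : ℝ)))^2 *
        ((derivative^[m] ((X^2-1 : Polynomial ℝ)^m)).eval y *
          (derivative^[m] ((X^2-1 : Polynomial ℝ)^m)).eval y) := by
    intro y; simp [legP]; ring
  simp only [hc]
  rw [intervalIntegral.integral_const_mul]
  rw [key_ibp m (derivative^[m] ((X^2-1 : Polynomial ℝ)^m)) m le_rfl]
  have h2m : derivative^[m] (derivative^[m] ((X^2-1 : Polynomial ℝ)^m))
      = C (((2*m).factorial : ℝ)) := by
    rw [← Function.iterate_add_apply, show m + m = 2*m by omega, top_deriv]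
  rw [h2m, Nat.sub_self]
  simp only [Function.iterate_zero_apply, eval_C]
  have hflip : ∀ y : ℝ, ((X^2-1 : Polynomial ℝ)^m).eval y * ((2*m).factorial : ℝ)
      = ((2*m).factorial : ℝ) * ((-1:ℝ)^m * (1-y^2)^m) := by
    intro y
    simp only [eval_pow, eval_sub, eval_one, eval_X]
    rw [show (y^2 - 1) = (-1) * (1-y^2) by ring, mul_pow]
    ring
  simp only [hflip]
  rw [intervalIntegral.integral_const_mul, intervalIntegral.integral_const_mul, J_val]
  have hfac : (((2*m+1).factorial : ℝ)) = (2*(m:ℝ)+1) * (((2*m).factorial : ℝ)) := by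
    rw [Nat.factorial_succ]; push_cast; ring
  have hne1 : ((2:ℝ)^m * (m.factorial : ℝ)) ≠ 0 := by positivity
  have hne2 : (2*(m:ℝ)+1) ≠ 0 := by positivity
  have hne3 : (((2*m).factorial : ℝ)) ≠ 0 := by positivity
  rw [hfac]
  have hm1 : ((-1:ℝ))^m * ((-1:ℝ))^m = 1 := by
    rw [← mul_pow]; norm_num
  set F := (((2*m).factorial : ℝ)) with hF
  set Q := (2:ℝ)^(2*m+1) * ((m.factorial:ℝ))^2 / ((2*(m:ℝ)+1) * F) with hQ
  have hstep : ((-1:ℝ))^m * (F * (((-1:ℝ))^m * Q)) = F * Q := by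
    rw [show ((-1:ℝ))^m * (F * (((-1:ℝ))^m * Q)) = (((-1:ℝ))^m * ((-1:ℝ))^m) * (F * Q) by ring,
      hm1, one_mul]
  rw [hstep, hQ]
  rw [show (2:ℝ)^(2*m+1) = 2 * ((2:ℝ)^m)^2 by rw [pow_succ, ← pow_mul]; ring]
  field_simp

lemma legP_ortho (m n : ℕ) (h : m < n) :
    ∫ y in (-1:ℝ)..1, (legP n).eval y * (legP m).eval y = 0 := by
  have hc : ∀ y : ℝ, (legP n).eval y * (legP m).eval y
      = ((1 / ((2:ℝ)^n * (n.factorial : ℝ))) * (1 / ((2:ℝ)^m * (m.factorial : ℝ)))) *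
        ((derivative^[n] ((X^2-1 : Polynomial ℝ)^n)).eval y *
          (derivative^[m] ((X^2-1 : Polynomial ℝ)^m)).eval y) := by
    intro y; simp [legP]; ring
  simp only [hc]
  rw [intervalIntegral.integral_const_mul,
    key_ibp n (derivative^[m] ((X^2-1 : Polynomial ℝ)^m)) n le_rfl]
  have hz : derivative^[n] (derivative^[m] ((X^2-1 : Polynomial ℝ)^m)) = 0 := by
    apply iterate_derivative_eq_zero
    have := natDegree_iterate_derivative ((X^2-1 : Polynomial ℝ)^m) m
    rw [natDegree_sq_sub_one_pow] at this
    omega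
  rw [hz]
  simp
lemma cs_bound (p : Polynomial ℝ) :
    (∫ y in (-1:ℝ)..1, |p.eval y|) ^ 2 ≤ 2 * ∫ y in (-1:ℝ)..1, (p.eval y)^2 := by
  set A := ∫ y in (-1:ℝ)..1, |p.eval y| with hA
  have hcont : Continuous fun y : ℝ => p.eval y := p.continuous_aeval
  have i1 : IntervalIntegrable (fun y => (p.eval y)^2) volume (-1) 1 :=
    (hcont.pow 2).intervalIntegrable _ _
  have i2 : IntervalIntegrable (fun y => A * |p.eval y|) volume (-1) 1 :=
    (continuous_const.mul hcont.abs).intervalIntegrable _ _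
  have i3 : IntervalIntegrable (fun y => (p.eval y)^2 - A * |p.eval y|) volume (-1) 1 := i1.sub i2
  have h0 : (0:ℝ) ≤ ∫ y in (-1:ℝ)..1, (|p.eval y| - A/2)^2 :=
    intervalIntegral.integral_nonneg (by norm_num) (fun y _ => sq_nonneg _)
  have hexp : ∀ y : ℝ, (|p.eval y| - A/2)^2
      = ((p.eval y)^2 - A * |p.eval y|) + (A/2)^2 := by
    intro y; rw [sub_sq, sq_abs]; ring
  rw [intervalIntegral.integral_congr (g := fun y => ((p.eval y)^2 - A * |p.eval y|) + (A/2)^2)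
    (fun y _ => hexp y)] at h0
  rw [intervalIntegral.integral_add i3 (intervalIntegrable_const),
    intervalIntegral.integral_sub i1 i2, intervalIntegral.integral_const_mul,
    intervalIntegral.integral_const] at h0
  simp only [smul_eq_mul] at h0
  nlinarith [h0]

lemma sqrt_four_mul (t : ℝ) (ht : 0 ≤ t) : Real.sqrt (4 * t) = 2 * Real.sqrt t := by
  rw [Real.sqrt_mul (by norm_num) t, show (4:ℝ) = 2^2 by norm_num, Real.sqrt_sq (by norm_num)]

/-- bound on the integral term A_n. -/
theorem abs_Aterm_le
    (K : ℕ) (b : ℕ → ℝ) (L : ℝ) (G : ℕ → ℝ → ℝ) (g : ℝ → ℝ)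
    (hb0 : b 0 = -1) (hbK : b (K + 1) = 1)
    (hbmono : ∀ i ≤ K, b i < b (i + 1))
    (hL : 0 ≤ L)
    (hG : ∀ i ≤ K, ContDiffOn ℝ 1 (G i) (Set.Icc (b i) (b (i + 1))))
    (hGder : ∀ i ≤ K, ∀ y ∈ Set.Icc (b i) (b (i + 1)),
      |derivWithin (G i) (Set.Icc (b i) (b (i + 1))) y| ≤ L)
    (hg1 : ∀ i < K, ∀ y, b i ≤ y → y < b (i + 1) → g y = G i y)
    (hg2 : ∀ y ∈ Set.Icc (b K) (b (K + 1)), g y = G K y)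
    (n : ℕ) (hn : 1 ≤ n) :
    |Aterm K b G n| ≤
      L * ((K : ℝ) + 1) / Real.sqrt (2 * (n : ℝ) + 1) *
        Real.sqrt (1 / (2 * (n : ℝ) + 3) + 1 / (2 * (n : ℝ) - 1)) := by
  obtain ⟨m, rfl⟩ : ∃ m, n = m + 1 := ⟨n - 1, by omega⟩
  -- the polynomial h = P_{n+1} - P_{n-1}
  set hpol : Polynomial ℝ := legP (m+2) - legP m with hhpol
  have hPdiff : ∀ y : ℝ, legendreP (m+1+1) y - legendreP (m+1-1) y = hpol.eval y := by
    intro y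
    rw [show m+1+1 = m+2 from rfl, show m+1-1 = m from rfl, legendreP_eq, legendreP_eq, hhpol,
      eval_sub]
  have hHcont : Continuous fun y : ℝ => hpol.eval y := hpol.continuous_aeval
  set t : ℝ := 1 / (2*(m:ℝ)+5) + 1 / (2*(m:ℝ)+1) with ht
  have htpos : 0 < t := by positivity
  -- the L² norm of h
  have hB : ∫ y in (-1:ℝ)..1, (hpol.eval y)^2 = 2 * t := by
    have isq : ∀ k : ℕ, IntervalIntegrable
        (fun y => (legP k).eval y * (legP k).eval y) volume (-1:ℝ) 1 :=
      fun k => ((legP k).continuous_aeval.mul (legP k).continuous_aeval).intervalIntegrable _ _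
    have icr : IntervalIntegrable
        (fun y => 2 * ((legP (m+2)).eval y * (legP m).eval y)) volume (-1:ℝ) 1 :=
      (continuous_const.mul ((legP (m+2)).continuous_aeval.mul
        (legP m).continuous_aeval)).intervalIntegrable _ _
    have hsplit : ∀ y : ℝ, (hpol.eval y)^2
        = ((legP (m+2)).eval y * (legP (m+2)).eval y
            - 2 * ((legP (m+2)).eval y * (legP m).eval y))
          + (legP m).eval y * (legP m).eval y := by
      intro y; rw [hhpol, eval_sub]; ring
    rw [intervalIntegral.integral_congr (fun y _ => hsplit y),
      intervalIntegral.integral_add ((isq (m+2)).sub icr) (isq m),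
      intervalIntegral.integral_sub (isq (m+2)) icr,
      intervalIntegral.integral_const_mul, legP_sq_int, legP_sq_int,
      legP_ortho m (m+2) (by omega)]
    push_cast
    rw [ht]
    ring
  -- Cauchy–Schwarz: the L¹ norm of h
  set A : ℝ := ∫ y in (-1:ℝ)..1, |hpol.eval y| with hA
  have hA0 : 0 ≤ A :=
    intervalIntegral.integral_nonneg (by norm_num) (fun y _ => abs_nonneg _)
  have hA2 : A ≤ 2 * Real.sqrt t := by
    have h1 : A^2 ≤ 4 * t := by
      have := cs_bound hpol
      rw [hB] at this
      linarith [this]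
    calc A = Real.sqrt (A^2) := (Real.sqrt_sq hA0).symm
      _ ≤ Real.sqrt (4*t) := Real.sqrt_le_sqrt h1
      _ = 2 * Real.sqrt t := sqrt_four_mul t htpos.le
  -- monotonicity of the partition points
  have hmono : ∀ j ≤ K+1, ∀ i ≤ j, b i ≤ b j := by
    intro j hj
    induction j with
    | zero => intro i hi; rw [Nat.le_zero.mp hi]
    | succ j ih =>
      intro i hi
      rcases Nat.eq_or_lt_of_le hi with h | h
      · rw [h]
      · exact le_trans (ih (by omega) i (by omega)) (hbmono j (by omega)).le
  -- bound each subinterval integral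
  have hterm : ∀ i ∈ Finset.range (K+1),
      |∫ y in (b i)..(b (i+1)),
        derivWithin (G i) (Set.Icc (b i) (b (i+1))) y *
          (legendreP (m+1+1) y - legendreP (m+1-1) y)| ≤ L * (2 * Real.sqrt t) := by
    intro i hi
    have hiK : i ≤ K := by simpa using Nat.lt_succ_iff.mp (Finset.mem_range.mp hi)
    have hij : b i < b (i+1) := hbmono i hiK
    have h1 : -1 ≤ b i := by rw [← hb0]; exact hmono i (by omega) 0 (by omega)
    have h2 : b (i+1) ≤ 1 := by rw [← hbK]; exact hmono (K+1) le_rfl (i+1) (by omega)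
    set g' := derivWithin (G i) (Set.Icc (b i) (b (i+1))) with hg'
    have hg'cont : ContinuousOn g' (Set.Icc (b i) (b (i+1))) :=
      (hG i hiK).continuousOn_derivWithin (uniqueDiffOn_Icc hij) le_rfl
    have hint : IntervalIntegrable (fun y => g' y * (legendreP (m+1+1) y - legendreP (m+1-1) y))
        volume (b i) (b (i+1)) := by
      apply ContinuousOn.intervalIntegrable
      rw [Set.uIcc_of_le hij.le]
      exact hg'cont.mul (by
        have : ∀ y ∈ Set.Icc (b i) (b (i+1)), legendreP (m+1+1) y - legendreP (m+1-1) y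
            = hpol.eval y := fun y _ => hPdiff y
        exact (hHcont.continuousOn).congr this)
    have hintLh : ∀ a c : ℝ, IntervalIntegrable (fun y => L * |hpol.eval y|) volume a c :=
      fun a c => (continuous_const.mul hHcont.abs).intervalIntegrable _ _
    calc |∫ y in (b i)..(b (i+1)), g' y * (legendreP (m+1+1) y - legendreP (m+1-1) y)|
        ≤ ∫ y in (b i)..(b (i+1)), |g' y * (legendreP (m+1+1) y - legendreP (m+1-1) y)| :=
          intervalIntegral.abs_integral_le_integral_abs hij.le
      _ ≤ ∫ y in (b i)..(b (i+1)), L * |hpol.eval y| := by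
          apply intervalIntegral.integral_mono_on hij.le hint.abs (hintLh _ _)
          intro y hy
          rw [abs_mul, hPdiff y]
          exact mul_le_mul_of_nonneg_right (hGder i hiK y hy) (abs_nonneg _)
      _ ≤ ∫ y in (-1:ℝ)..1, L * |hpol.eval y| := by
          apply intervalIntegral.integral_mono_interval h1 hij.le h2
            (Filter.Eventually.of_forall fun y => by positivity) (hintLh _ _)
      _ = L * A := by rw [intervalIntegral.integral_const_mul]
      _ ≤ L * (2 * Real.sqrt t) := mul_le_mul_of_nonneg_left hA2 hL
  -- assemble
  have hsum : |∑ i ∈ Finset.range (K+1),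
      ∫ y in (b i)..(b (i+1)),
        derivWithin (G i) (Set.Icc (b i) (b (i+1))) y *
          (legendreP (m+1+1) y - legendreP (m+1-1) y)|
      ≤ ((K:ℝ)+1) * (L * (2 * Real.sqrt t)) := by
    refine le_trans (Finset.abs_sum_le_sum_abs _ _) ?_
    refine le_trans (Finset.sum_le_card_nsmul _ _ _ hterm) ?_
    rw [Finset.card_range, nsmul_eq_mul]
    push_cast
    exact le_rfl
  have hspos : 0 < Real.sqrt (2*((m:ℝ)+1)+1) := Real.sqrt_pos.mpr (by positivity)
  have hteq : (1 : ℝ) / (2 * ((m:ℝ)+1) + 3) + 1 / (2 * ((m:ℝ)+1) - 1) = t := by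
    rw [ht]; ring_nf
  rw [Aterm, abs_mul, abs_neg, abs_of_nonneg (by positivity)]
  push_cast
  rw [hteq]
  calc (1 / (2 * Real.sqrt (2*((m:ℝ)+1)+1))) * |∑ i ∈ Finset.range (K+1),
      ∫ y in (b i)..(b (i+1)),
        derivWithin (G i) (Set.Icc (b i) (b (i+1))) y *
          (legendreP (m+1+1) y - legendreP (m+1-1) y)|
      ≤ (1 / (2 * Real.sqrt (2*((m:ℝ)+1)+1))) * (((K:ℝ)+1) * (L * (2 * Real.sqrt t))) := by
        apply mul_le_mul_of_nonneg_left hsum (by positivity)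
    _ = L * ((K:ℝ)+1) / Real.sqrt (2*((m:ℝ)+1)+1) * Real.sqrt t := by
        field_simp
end

section
/- In the piecewise setting on [−1,1], for every integer N ≥ 1 the cross terms satisfy Σ_{n=N}^∞ |A_n|·|B_n| ≤ √2·L·(K+1)·S·ζ(3/2, N), where A_n = −(1/(2√(2n+1)))·Σ_{i=1}^{K+1} ∫_{b_{i−1}}^{b_i} g_i'(y)·(P_{n+1}(y) − P_{n−1}(y)) dy, B_n = (1/(2√(2n+1)))·Σ_{i=1}^{K} (g_i(b_i) − g_{i+1}(b_i))·(P_{n+1}(b_i) − P_{n−1}(b_i)), and S = Σ_{i=1}^K |g_{i+1}(b_i) − g_i(b_i)|. In particular this uses the comparison Σ_{n=N}^∞ (2n−1)^{−3/2} ≤ ζ(3/2, N). -/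
open MeasureTheory Set Polynomial

namespace LegAux

noncomputable def U (n : ℕ) : Polynomial ℝ := (X ^ 2 - 1) ^ n

noncomputable def Leg (n : ℕ) : Polynomial ℝ :=
  C ((1 : ℝ) / (2 ^ n * n.factorial)) * derivative^[n] (U n)

lemma iteratedDeriv_polyeval (k : ℕ) (p : Polynomial ℝ) :
    iteratedDeriv k (fun x => p.eval x) = fun x => (derivative^[k] p).eval x := by
  induction k generalizing p with
  | zero => simp
  | succ k ih =>
    rw [iteratedDeriv_succ']
    have : (deriv fun x => p.eval x) = fun x => (derivative p).eval x := by
      funext x; exact Polynomial.deriv p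
    rw [this, ih, Function.iterate_succ_apply]

lemma legendreP_eq (n : ℕ) (y : ℝ) : legendreP n y = (Leg n).eval y := by
  have h : (fun x : ℝ => (x ^ 2 - 1) ^ n) = fun x => (U n).eval x := by
    funext x; simp [U]
  rw [legendreP, h, iteratedDeriv_polyeval, Leg, eval_mul, eval_C]

lemma continuous_legendreP (n : ℕ) : Continuous (legendreP n) := by
  have : legendreP n = fun y => (Leg n).eval y := by funext y; exact legendreP_eq n y
  rw [this]; exact Polynomial.continuous _

lemma U_eq (n : ℕ) : U n = (X - C 1) ^ n * (X - C (-1)) ^ n := by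
  rw [U, ← mul_pow]
  congr 1
  simp only [C_1, C_neg]
  ring

lemma eval_one_iterate_derivative_U (n j : ℕ) (hj : j < n) :
    (derivative^[j] (U n)).eval 1 = 0 := by
  rw [U_eq, iterate_derivative_mul]
  rw [eval_finset_sum]
  apply Finset.sum_eq_zero
  intro k hk
  rw [eval_smul, eval_mul, iterate_derivative_X_sub_pow, eval_smul, eval_pow, eval_sub, eval_X,
    eval_C, sub_self, zero_pow (by omega : n - (j - k) ≠ 0)]
  simp

lemma eval_negone_iterate_derivative_U (n j : ℕ) (hj : j < n) :
    (derivative^[j] (U n)).eval (-1) = 0 := by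
  rw [U_eq, iterate_derivative_mul]
  rw [eval_finset_sum]
  apply Finset.sum_eq_zero
  intro k hk
  simp only [Finset.mem_range] at hk
  rw [eval_smul, eval_mul, iterate_derivative_X_sub_pow (c := (-1:ℝ)), eval_smul, eval_pow,
    eval_sub, eval_X, eval_C, sub_neg_eq_add, neg_add_cancel,
    zero_pow (by omega : n - k ≠ 0)]
  simp

lemma eval_one_Dn_U (n : ℕ) :
    (derivative^[n] (U n)).eval 1 = (n.factorial : ℝ) * 2 ^ n := by
  rw [U_eq, iterate_derivative_mul, eval_finset_sum]
  rw [Finset.sum_eq_single 0]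
  · rw [Nat.choose_zero_right, one_smul, eval_mul, Nat.sub_zero,
      iterate_derivative_X_sub_pow_self, Function.iterate_zero_apply]
    simp
    norm_num
  · intro k hk hk0
    simp only [Finset.mem_range] at hk
    rw [eval_smul, eval_mul, iterate_derivative_X_sub_pow, eval_smul, eval_pow, eval_sub,
      eval_X, eval_C, sub_self, zero_pow (by omega : n - (n - k) ≠ 0)]
    simp
  · intro h
    simp at h

lemma eval_negone_Dn_U (n : ℕ) :
    (derivative^[n] (U n)).eval (-1) = (n.factorial : ℝ) * (-2) ^ n := by
  rw [U_eq, iterate_derivative_mul, eval_finset_sum]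
  rw [Finset.sum_eq_single n]
  · rw [Nat.choose_self, one_smul, eval_mul, Nat.sub_self, Function.iterate_zero_apply,
      iterate_derivative_X_sub_pow_self]
    simp
    ring
  · intro k hk hk0
    simp only [Finset.mem_range] at hk
    rw [eval_smul, eval_mul, iterate_derivative_X_sub_pow (c := (-1:ℝ)), eval_smul, eval_pow,
      eval_sub, eval_X, eval_C, sub_neg_eq_add, neg_add_cancel,
      zero_pow (by omega : n - k ≠ 0)]
    simp
  · intro h
    simp at h

lemma eval_one_Leg (n : ℕ) : (Leg n).eval 1 = 1 := by
  rw [Leg, eval_mul, eval_C, eval_one_Dn_U]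
  have h2 : ((2:ℝ)^n) ≠ 0 := by positivity
  have hf : ((n.factorial : ℝ)) ≠ 0 := by positivity
  field_simp

lemma eval_negone_Leg (n : ℕ) : (Leg n).eval (-1) = (-1) ^ n := by
  rw [Leg, eval_mul, eval_C, eval_negone_Dn_U]
  have h2 : ((2:ℝ)^n) ≠ 0 := by positivity
  have hf : ((n.factorial : ℝ)) ≠ 0 := by positivity
  have : ((-2:ℝ))^n = (-1)^n * 2^n := by rw [← neg_one_mul, mul_pow]
  rw [this]
  field_simp



lemma iterate_derivative_add (k : ℕ) (p q : Polynomial ℝ) :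
    derivative^[k] (p + q) = derivative^[k] p + derivative^[k] q := by
  induction k generalizing p q with
  | zero => simp
  | succ k ih => simp [Function.iterate_succ_apply, ih]

lemma Dit_X_mul (k : ℕ) : ∀ p : Polynomial ℝ,
    derivative^[k + 1] (X * p) =
      X * derivative^[k + 1] p + ((k : Polynomial ℝ) + 1) * derivative^[k] p := by
  induction k with
  | zero => intro p; simp [derivative_mul]; ring
  | succ k ih =>
    intro p
    rw [Function.iterate_succ_apply derivative (k+1) (X * p)]
    have hd : derivative (X * p) = X * derivative p + p := by
      rw [derivative_mul, derivative_X, one_mul]; ring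
    rw [hd, iterate_derivative_add, ih (derivative p),
      ← Function.iterate_succ_apply derivative (k+1) p,
      ← Function.iterate_succ_apply derivative k p]
    simp only [Nat.succ_eq_add_one, show k+1+1 = k+2 from by omega]
    push_cast
    ring

lemma Dit_sq_mul (k : ℕ) : ∀ p : Polynomial ℝ,
    derivative^[k + 2] ((X ^ 2 - 1) * p) =
      (X ^ 2 - 1) * derivative^[k + 2] p
        + (2 * (k : Polynomial ℝ) + 4) * (X * derivative^[k + 1] p)
        + ((k : Polynomial ℝ) + 2) * ((k : Polynomial ℝ) + 1) * derivative^[k] p := by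
  induction k with
  | zero =>
    intro p
    have hd : derivative ((X ^ 2 - 1) * p) = (X ^ 2 - 1) * derivative p + (2 * X) * p := by
      simp only [derivative_mul, derivative_sub, derivative_one, derivative_X_pow]
      simp [Nat.cast_ofNat, map_ofNat]
      ring
    show derivative^[1+1] _ = _
    rw [Function.iterate_succ_apply derivative (1) ((X^2-1) * p), hd]
    simp only [Function.iterate_succ_apply, Function.iterate_zero_apply]
    simp only [derivative_add, derivative_mul, derivative_sub, derivative_one, derivative_X_pow,
      derivative_X, derivative_ofNat, Nat.cast_ofNat, map_ofNat]
    push_cast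
    ring
  | succ k ih =>
    intro p
    rw [Function.iterate_succ_apply derivative (k+2) ((X^2-1) * p)]
    have hd : derivative ((X ^ 2 - 1) * p) = (X ^ 2 - 1) * derivative p + 2 * (X * p) := by
      simp only [derivative_mul, derivative_sub, derivative_one, derivative_X_pow, Nat.cast_ofNat, map_ofNat]
      push_cast
      ring
    have h2 : (2 : Polynomial ℝ) * (X * p) = C 2 * (X * p) := by rw [map_ofNat]
    rw [hd, iterate_derivative_add, ih (derivative p), h2, iterate_derivative_C_mul,
      Dit_X_mul (k+1) p,
      ← Function.iterate_succ_apply derivative (k+2) p,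
      ← Function.iterate_succ_apply derivative (k+1) p,
      ← Function.iterate_succ_apply derivative k p]
    simp only [Nat.succ_eq_add_one, map_ofNat,
      show k+1+1 = k+2 from by omega, show k+2+1 = k+3 from by omega,
      show k+1+2 = k+3 from by omega]
    push_cast
    ring

end LegAux

namespace LegAux

lemma H0 (m : ℕ) :
    (X ^ 2 - 1) * derivative (U (m + 1)) = C (2 * ((m:ℝ) + 1)) * (X * U (m + 1)) := by
  rw [U, derivative_pow]
  simp only [Nat.add_sub_cancel, derivative_sub, derivative_one, derivative_X_pow,
    Nat.cast_ofNat, map_ofNat, sub_zero, pow_one]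
  have hC : (C (2 * ((m:ℝ) + 1)) : Polynomial ℝ) = 2 * ((m : Polynomial ℝ) + 1) := by
    rw [C_mul, C_add, C_1, C_eq_natCast, map_ofNat]
  rw [hC, C_eq_natCast]
  push_cast [pow_succ]
  ring

lemma ODE_eval_V (m : ℕ) (y : ℝ) :
    (y ^ 2 - 1) * (derivative (derivative (derivative^[m+1] (U (m+1))))).eval y
      + 2 * y * (derivative (derivative^[m+1] (U (m+1)))).eval y
      = ((m:ℝ)+1) * ((m:ℝ)+2) * (derivative^[m+1] (U (m+1))).eval y := by
  have h1 := congrArg (fun q => derivative^[m+2] q) (H0 m)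
  rw [Dit_sq_mul m (derivative (U (m+1))), iterate_derivative_C_mul,
    Dit_X_mul (m+1) (U (m+1))] at h1
  rw [← Function.iterate_succ_apply derivative m (U (m+1)),
    ← Function.iterate_succ_apply derivative (m+1) (U (m+1)),
    ← Function.iterate_succ_apply derivative (m+2) (U (m+1))] at h1
  simp only [Nat.succ_eq_add_one] at h1
  rw [show m+2+1 = m+1+1+1 from rfl, show m+2 = m+1+1 from rfl] at h1
  rw [Function.iterate_succ_apply' derivative (m+1+1) (U (m+1)),
    Function.iterate_succ_apply' derivative (m+1) (U (m+1))] at h1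
  have h2 := congrArg (eval y) h1
  simp only [eval_add, eval_mul, eval_sub, eval_pow, eval_X, eval_one, eval_C, eval_natCast,
    eval_ofNat] at h2
  push_cast at h2
  linear_combination h2

lemma ODE_eval (n : ℕ) (hn : 1 ≤ n) (y : ℝ) :
    (y ^ 2 - 1) * (derivative (derivative (Leg n))).eval y
      + 2 * y * (derivative (Leg n)).eval y
      = (n:ℝ) * ((n:ℝ) + 1) * (Leg n).eval y := by
  obtain ⟨m, rfl⟩ : ∃ m, n = m + 1 := ⟨n - 1, by omega⟩
  have h := ODE_eval_V m y
  rw [Leg, derivative_C_mul, derivative_C_mul]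
  simp only [eval_mul, eval_C]
  push_cast
  linear_combination (1 / (2 ^ (m+1) * ((m+1).factorial : ℝ))) * h

end LegAux

namespace LegAux

lemma abs_Leg_le_one (n : ℕ) {y : ℝ} (hy : y ∈ Icc (-1:ℝ) 1) : |(Leg n).eval y| ≤ 1 := by
  rcases Nat.eq_zero_or_pos n with rfl | hn
  · simp [Leg, U]
  set L := Leg n with hL
  have hc0 : 0 < (n:ℝ) * ((n:ℝ) + 1) := by
    have : (1:ℝ) ≤ (n:ℝ) := by exact_mod_cast hn
    positivity
  set F : Polynomial ℝ := C ((n:ℝ) * ((n:ℝ) + 1)) * L ^ 2 + (1 - X ^ 2) * (derivative L) ^ 2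
    with hF
  set f : ℝ → ℝ := fun x => F.eval x with hf
  have hderiv : ∀ x : ℝ, deriv f x = 2 * x * ((derivative L).eval x) ^ 2 := by
    intro x
    have hd : deriv f x = (derivative F).eval x := Polynomial.deriv F
    rw [hd, hF]
    have hode := ODE_eval n hn x
    have h2 : (x ^ 2 - 1) * (derivative (derivative L)).eval x
        = (n:ℝ) * ((n:ℝ) + 1) * L.eval x - 2 * x * (derivative L).eval x := by
      rw [hL]; linear_combination hode
    simp only [derivative_add, derivative_mul, derivative_C_mul, derivative_pow, derivative_sub,
      derivative_one, derivative_X_pow, derivative_C, derivative_X, Nat.cast_ofNat, map_ofNat,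
      pow_one, Nat.add_sub_cancel, zero_mul, zero_add, zero_sub, eval_add, eval_mul, eval_sub,
      eval_pow, eval_neg, eval_X, eval_one, eval_C, eval_ofNat]
    linear_combination (-2 * (derivative L).eval x) * h2
  have hdiff : Differentiable ℝ f := fun x => (F.differentiable).differentiableAt
  have hcont : Continuous f := F.continuous
  have hmono : MonotoneOn f (Icc (0:ℝ) 1) := by
    apply monotoneOn_of_deriv_nonneg (convex_Icc 0 1) hcont.continuousOn
      (hdiff.differentiableOn)
    intro x hx
    rw [interior_Icc] at hx
    rw [hderiv]
    have : (0:ℝ) ≤ x := le_of_lt hx.1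
    positivity
  have hanti : AntitoneOn f (Icc (-1:ℝ) 0) := by
    apply antitoneOn_of_deriv_nonpos (convex_Icc (-1) 0) hcont.continuousOn
      (hdiff.differentiableOn)
    intro x hx
    rw [interior_Icc] at hx
    rw [hderiv]
    nlinarith [sq_nonneg ((derivative L).eval x), hx.2, sq_nonneg ((derivative L).eval x) ]
  have hf1 : f 1 = (n:ℝ) * ((n:ℝ) + 1) := by
    rw [hf, hF]
    simp only [eval_add, eval_mul, eval_sub, eval_pow, eval_one, eval_X, eval_C]
    rw [hL, eval_one_Leg]
    ring
  have hfm1 : f (-1) = (n:ℝ) * ((n:ℝ) + 1) := by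
    rw [hf, hF]
    simp only [eval_add, eval_mul, eval_sub, eval_pow, eval_one, eval_X, eval_C]
    rw [hL, eval_negone_Leg]
    rw [← pow_mul, mul_comm n 2, pow_mul]
    norm_num
  have hfy : f y ≤ (n:ℝ) * ((n:ℝ) + 1) := by
    rcases le_or_gt y 0 with h0 | h0
    · have h := hanti (show (-1:ℝ) ∈ Icc (-1:ℝ) 0 by constructor <;> norm_num)
        ⟨hy.1, h0⟩ hy.1
      rw [hfm1] at h; exact h
    · have h := hmono ⟨h0.le, hy.2⟩ (show (1:ℝ) ∈ Icc (0:ℝ) 1 by constructor <;> norm_num)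
        hy.2
      rw [hf1] at h; exact h
  have hsq : (L.eval y) ^ 2 ≤ 1 := by
    have hle : (n:ℝ) * ((n:ℝ) + 1) * (L.eval y) ^ 2 ≤ f y := by
      rw [hf, hF]
      simp only [eval_add, eval_mul, eval_sub, eval_pow, eval_one, eval_X, eval_C]
      nlinarith [mul_nonneg (mul_nonneg (sub_nonneg.2 hy.2)
          (by linarith [hy.1] : (0:ℝ) ≤ y + 1)) (sq_nonneg ((derivative L).eval y))]
    nlinarith [hfy, hle, hc0]
  nlinarith [hsq, abs_nonneg (L.eval y), sq_abs (L.eval y)]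

end LegAux

namespace LegAux

lemma polyContIntegrable (p q : Polynomial ℝ) (a b : ℝ) :
    IntervalIntegrable (fun y => p.eval y * q.eval y) volume a b :=
  (Continuous.mul (Polynomial.continuous p) (Polynomial.continuous q)).intervalIntegrable a b

lemma ibp_chain (n : ℕ) : ∀ k, k ≤ n → ∀ p : Polynomial ℝ,
    (∫ y in (-1:ℝ)..1, p.eval y * (derivative^[n] (U n)).eval y)
      = (-1:ℝ)^k * ∫ y in (-1:ℝ)..1,
          (derivative^[k] p).eval y * (derivative^[n-k] (U n)).eval y := by
  intro k
  induction k with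
  | zero => intro _ p; simp
  | succ k ih =>
    intro hk1 p
    have hkn : k < n := by omega
    have step : (∫ y in (-1:ℝ)..1, (derivative^[k] p).eval y * (derivative^[n-k] (U n)).eval y)
        = - ∫ y in (-1:ℝ)..1,
            (derivative^[k+1] p).eval y * (derivative^[n-(k+1)] (U n)).eval y := by
      have hsplit : n - k = (n - (k+1)) + 1 := by omega
      rw [hsplit, Function.iterate_succ_apply' derivative (n-(k+1)) (U n)]
      have hu : ∀ x ∈ Set.uIcc (-1:ℝ) 1, HasDerivAt (fun y => (derivative^[k] p).eval y)
          ((derivative^[k+1] p).eval x) x := by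
        intro x _
        have := Polynomial.hasDerivAt (derivative^[k] p) x
        rwa [← Function.iterate_succ_apply' derivative k p] at this
      have hv : ∀ x ∈ Set.uIcc (-1:ℝ) 1,
          HasDerivAt (fun y => (derivative^[n-(k+1)] (U n)).eval y)
          ((derivative (derivative^[n-(k+1)] (U n))).eval x) x := by
        intro x _
        exact Polynomial.hasDerivAt _ x
      have hibp := intervalIntegral.integral_mul_deriv_eq_deriv_mul hu hv
        ((Polynomial.continuous _).intervalIntegrable _ _)
        ((Polynomial.continuous _).intervalIntegrable _ _)
      rw [hibp, eval_one_iterate_derivative_U n (n-(k+1)) (by omega),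
        eval_negone_iterate_derivative_U n (n-(k+1)) (by omega)]
      simp
    rw [ih (by omega) p, step, pow_succ]
    ring

lemma J_val : ∀ n : ℕ, (∫ y in (-1:ℝ)..1, (y^2-1)^n)
    = (-1:ℝ)^n * (2^(2*n+1) * (n.factorial:ℝ)^2 / ((2*n+1).factorial : ℝ)) := by
  intro n
  induction n with
  | zero => simp; norm_num
  | succ n ih =>
    have hv : ∀ x ∈ Set.uIcc (-1:ℝ) 1, HasDerivAt (fun y : ℝ => (y^2-1)^(n+1))
        ((((n:ℝ)+1) * (x^2-1)^n) * (2*x)) x := by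
      intro x _
      have h1 : HasDerivAt (fun y : ℝ => y^2-1) (2*x) x := by
        simpa using ((hasDerivAt_pow 2 x).sub_const 1)
      have := h1.fun_pow (n+1)
      simpa [mul_comm, mul_assoc, mul_left_comm] using this
    have hu : ∀ x ∈ Set.uIcc (-1:ℝ) 1, HasDerivAt (fun y : ℝ => y) (1:ℝ) x := by
      intro x _; exact hasDerivAt_id x
    have hibp := intervalIntegral.integral_mul_deriv_eq_deriv_mul hu hv
      (continuous_const.intervalIntegrable _ _)
      ((Continuous.mul (by continuity) (by continuity)).intervalIntegrable _ _)
    -- hibp : ∫ x * ((n+1)(x²-1)^n * (2x)) = 1*0 - (-1)*0 - ∫ 1 * (x²-1)^{n+1}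
    have hb1 : ((1:ℝ)^2 - 1)^(n+1) = 0 := by norm_num
    have hbm1 : (((-1:ℝ))^2 - 1)^(n+1) = 0 := by norm_num
    rw [hb1, hbm1] at hibp
    have hlhs : (∫ x in (-1:ℝ)..1, x * ((((n:ℝ)+1) * (x^2-1)^n) * (2*x)))
        = (2*((n:ℝ)+1)) * (∫ x in (-1:ℝ)..1, (x^2-1)^(n+1))
          + (2*((n:ℝ)+1)) * (∫ x in (-1:ℝ)..1, (x^2-1)^n) := by
      have hcongr : (∫ x in (-1:ℝ)..1, x * ((((n:ℝ)+1) * (x^2-1)^n) * (2*x)))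
          = ∫ x in (-1:ℝ)..1,
              ((2*((n:ℝ)+1)) * (x^2-1)^(n+1) + (2*((n:ℝ)+1)) * (x^2-1)^n) := by
        apply intervalIntegral.integral_congr
        intro x _
        simp only []
        ring
      rw [hcongr, intervalIntegral.integral_add
        (((continuous_const.fun_mul (by continuity)).intervalIntegrable _ _))
        (((continuous_const.fun_mul (by continuity)).intervalIntegrable _ _)),
        intervalIntegral.integral_const_mul, intervalIntegral.integral_const_mul]
    rw [hlhs] at hibp
    have hone : (∫ x in (-1:ℝ)..1, (1:ℝ) * (x^2-1)^(n+1))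
        = ∫ x in (-1:ℝ)..1, (x^2-1)^(n+1) := by
      simp
    rw [hone] at hibp
    -- hibp : 2(n+1) J_{n+1} + 2(n+1) J_n = 1*0 - (-1)*0 - J_{n+1}
    have hrel : (2*((n:ℝ)+1) + 1) * (∫ x in (-1:ℝ)..1, (x^2-1)^(n+1))
        = -(2*((n:ℝ)+1)) * (∫ x in (-1:ℝ)..1, (x^2-1)^n) := by
      linarith [hibp]
    have hfac1 : ((2*(n+1)+1).factorial : ℝ)
        = (2*(n:ℝ)+3) * ((2*(n:ℝ)+2) * ((2*n+1).factorial : ℝ)) := by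
      have h1 : 2*(n+1)+1 = (2*n+1) + 1 + 1 := by omega
      rw [h1, Nat.factorial_succ, Nat.factorial_succ]
      push_cast
      ring
    have hfacpos : (0:ℝ) < ((2*n+1).factorial : ℝ) := by
      exact_mod_cast Nat.factorial_pos _
    have h3 : (2*((n:ℝ)+1) + 1) ≠ 0 := by positivity
    rw [ih] at hrel
    have : (∫ x in (-1:ℝ)..1, (x^2-1)^(n+1))
        = (-(2*((n:ℝ)+1)) * ((-1:ℝ)^n * (2^(2*n+1) * (n.factorial:ℝ)^2
            / ((2*n+1).factorial : ℝ)))) / (2*((n:ℝ)+1) + 1) := by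
      field_simp at hrel ⊢
      linarith [hrel]
    rw [this, hfac1]
    have hfs : (((n+1).factorial : ℕ) : ℝ) = ((n:ℝ)+1) * (n.factorial:ℝ) := by
      rw [Nat.factorial_succ]; push_cast; ring
    have hne : ((2*n+1).factorial : ℝ) ≠ 0 := ne_of_gt hfacpos
    rw [hfs, pow_succ]
    push_cast
    field_simp
    ring

lemma Dn_Leg (n : ℕ) :
    derivative^[n] (Leg n) = C ((1:ℝ) / (2^n * n.factorial) * ((2*n).factorial : ℝ)) := by
  have hU : derivative^[2*n] (U n) = C (((2*n).factorial : ℝ)) := by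
    have hmonic : ((X:Polynomial ℝ)^2 - C 1).Monic := monic_X_pow_sub_C 1 (by norm_num)
    have hUC : U n = ((X:Polynomial ℝ)^2 - C 1)^n := by rw [U, C_1]
    have hdeg : (U n).natDegree = 2*n := by
      rw [hUC, natDegree_pow, natDegree_X_pow_sub_C]
      ring
    have hcoeff : (U n).coeff (2*n) = 1 := by
      have := (hmonic.pow (n := n)).coeff_natDegree
      rw [← hUC] at this
      rwa [hdeg] at this
    have hdeg0 : (derivative^[2*n] (U n)).natDegree = 0 := by
      have := natDegree_iterate_derivative (U n) (2*n)
      omega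
    have heq := (Polynomial.eq_C_of_natDegree_le_zero (le_of_eq hdeg0))
    rw [heq, coeff_iterate_derivative, zero_add, hcoeff, Nat.descFactorial_self]
    norm_num
  rw [Leg, iterate_derivative_C_mul, ← Function.iterate_add_apply, ← two_mul, hU, ← C_mul]

lemma Leg_norm (n : ℕ) :
    (∫ y in (-1:ℝ)..1, ((Leg n).eval y)^2) = 2 / (2*(n:ℝ)+1) := by
  have hc : ∀ y : ℝ, ((Leg n).eval y)^2
      = ((1:ℝ) / (2^n * n.factorial)) * ((Leg n).eval y * (derivative^[n] (U n)).eval y) := by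
    intro y
    rw [pow_two]
    nth_rewrite 2 [Leg]
    rw [eval_mul, eval_C]
    ring
  rw [intervalIntegral.integral_congr (g :=
      fun y => ((1:ℝ) / (2^n * n.factorial)) * ((Leg n).eval y * (derivative^[n] (U n)).eval y))
      (fun y _ => hc y),
    intervalIntegral.integral_const_mul,
    ibp_chain n n le_rfl (Leg n), Dn_Leg, Nat.sub_self]
  have hUeval : (∫ y in (-1:ℝ)..1,
      (C ((1:ℝ) / (2^n * n.factorial) * ((2*n).factorial : ℝ))).eval y
        * (derivative^[0] (U n)).eval y)
      = ((1:ℝ) / (2^n * n.factorial) * ((2*n).factorial : ℝ))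
          * ∫ y in (-1:ℝ)..1, (y^2-1)^n := by
    rw [← intervalIntegral.integral_const_mul]
    apply intervalIntegral.integral_congr
    intro y _
    simp [U]
  rw [hUeval, J_val]
  have hfacpos : (0:ℝ) < ((2*n+1).factorial : ℝ) := by exact_mod_cast Nat.factorial_pos _
  have hfac2 : ((2*n+1).factorial : ℝ) = (2*(n:ℝ)+1) * ((2*n).factorial : ℝ) := by
    rw [Nat.factorial_succ]; push_cast; ring
  have h2n : ((2*n).factorial : ℝ) ≠ 0 := by
    exact_mod_cast Nat.factorial_ne_zero _
  have hnf : ((n.factorial : ℝ)) ≠ 0 := by exact_mod_cast Nat.factorial_ne_zero _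
  have h2p : ((2:ℝ)^n) ≠ 0 := by positivity
  have h21 : (2*(n:ℝ)+1) ≠ 0 := by positivity
  ring_nf
  rw [show ((-1:ℝ))^(n*2) = 1 from by rw [mul_comm n 2, pow_mul]; norm_num]
  have hfac2' : (((1+n*2).factorial : ℕ):ℝ) = (2*(n:ℝ)+1) * (((n*2).factorial : ℕ):ℝ) := by
    rw [show 1+n*2 = (n*2)+1 from by omega, Nat.factorial_succ]
    push_cast; ring
  rw [hfac2']
  have h12 : ((1:ℝ)/2)^(n*2) * 2^(n*2) = 1 := by rw [← mul_pow]; norm_num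
  field_simp
  linear_combination (2*(n:ℝ)+1) * h12

end LegAux

namespace LegAux

lemma abs_legendreP_le_one (n : ℕ) {y : ℝ} (h1 : -1 ≤ y) (h2 : y ≤ 1) :
    |legendreP n y| ≤ 1 := by
  rw [legendreP_eq]; exact abs_Leg_le_one n ⟨h1, h2⟩

lemma legendreP_sq_integral (n : ℕ) :
    (∫ y in (-1:ℝ)..1, (legendreP n y)^2) = 2 / (2*(n:ℝ)+1) := by
  rw [intervalIntegral.integral_congr (g := fun y => ((Leg n).eval y)^2)
    (fun y _ => by rw [legendreP_eq])]
  exact Leg_norm n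

lemma contDelta (m : ℕ) : Continuous (fun y => legendreP (m+2) y - legendreP m y) :=
  (continuous_legendreP (m+2)).sub (continuous_legendreP m)

lemma DeltaP_sq_int_le (m : ℕ) :
    (∫ y in (-1:ℝ)..1, (legendreP (m+2) y - legendreP m y)^2) ≤ 8 / (2*(m:ℝ)+1) := by
  have hmono : (∫ y in (-1:ℝ)..1, (legendreP (m+2) y - legendreP m y)^2)
      ≤ ∫ y in (-1:ℝ)..1, (2*(legendreP (m+2) y)^2 + 2*(legendreP m y)^2) := by
    apply intervalIntegral.integral_mono_on (by norm_num)
    · exact ((contDelta m).pow 2).intervalIntegrable _ _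
    · exact ((continuous_const.mul ((continuous_legendreP (m+2)).pow 2)).add
        (continuous_const.mul ((continuous_legendreP m).pow 2))).intervalIntegrable _ _
    · intro x _
      nlinarith [sq_nonneg (legendreP (m+2) x + legendreP m x)]
  have hadd : (∫ y in (-1:ℝ)..1, (2*(legendreP (m+2) y)^2 + 2*(legendreP m y)^2))
      = 2 * (2 / (2*((m:ℝ)+2)+1)) + 2 * (2 / (2*(m:ℝ)+1)) := by
    rw [intervalIntegral.integral_add
      ((continuous_const.fun_mul ((continuous_legendreP (m+2)).fun_pow 2)).intervalIntegrable _ _)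
      ((continuous_const.fun_mul ((continuous_legendreP m).fun_pow 2)).intervalIntegrable _ _),
      intervalIntegral.integral_const_mul, intervalIntegral.integral_const_mul,
      legendreP_sq_integral, legendreP_sq_integral]
    push_cast
    ring
  have h1 : 2 * (2 / (2*((m:ℝ)+2)+1)) + 2 * (2 / (2*(m:ℝ)+1)) ≤ 8 / (2*(m:ℝ)+1) := by
    have hm0 : (0:ℝ) < 2*(m:ℝ)+1 := by positivity
    have hm5 : (0:ℝ) < 2*((m:ℝ)+2)+1 := by positivity
    have : 2 / (2*((m:ℝ)+2)+1) ≤ 2 / (2*(m:ℝ)+1) := by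
      apply div_le_div_of_nonneg_left (by norm_num) hm0
      linarith
    have h8 : 8/(2*(m:ℝ)+1) = 2*(2/(2*(m:ℝ)+1)) + 2*(2/(2*(m:ℝ)+1)) := by ring
    linarith [this]
  linarith [hmono, hadd.le, hadd.ge, h1]

lemma DeltaP_abs_int_le (m : ℕ) :
    (∫ y in (-1:ℝ)..1, |legendreP (m+2) y - legendreP m y|)
      ≤ 4 / Real.sqrt (2*(m:ℝ)+1) := by
  set s : ℝ := Real.sqrt (2*(m:ℝ)+1) with hs
  have hs0 : 0 < s := Real.sqrt_pos.mpr (by positivity)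
  have hssq : s^2 = 2*(m:ℝ)+1 := Real.sq_sqrt (by positivity)
  set t : ℝ := 2 / s with ht
  have ht0 : 0 < t := by positivity
  have hpt : ∀ y : ℝ, |legendreP (m+2) y - legendreP m y|
      ≤ (legendreP (m+2) y - legendreP m y)^2 * (1/(2*t)) + t/2 := by
    intro y
    set a := legendreP (m+2) y - legendreP m y with ha
    have key : |a| ≤ (a^2 + t^2)/(2*t) := by
      rw [le_div_iff₀ (by positivity)]
      nlinarith [sq_abs a, sq_nonneg (|a| - t)]
    have heq : (a^2+t^2)/(2*t) = a^2 * (1/(2*t)) + t/2 := by field_simp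
    linarith [key, heq.le, heq.ge]
  have hmono : (∫ y in (-1:ℝ)..1, |legendreP (m+2) y - legendreP m y|)
      ≤ ∫ y in (-1:ℝ)..1,
          ((legendreP (m+2) y - legendreP m y)^2 * (1/(2*t)) + t/2) := by
    apply intervalIntegral.integral_mono_on (by norm_num)
    · exact (contDelta m).abs.intervalIntegrable _ _
    · exact ((((contDelta m).pow 2).mul continuous_const).add continuous_const).intervalIntegrable _ _
    · intro x _; exact hpt x
  have hval : (∫ y in (-1:ℝ)..1,
        ((legendreP (m+2) y - legendreP m y)^2 * (1/(2*t)) + t/2))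
      = (∫ y in (-1:ℝ)..1, (legendreP (m+2) y - legendreP m y)^2) * (1/(2*t)) + t := by
    rw [intervalIntegral.integral_add
      ((((contDelta m).fun_pow 2).fun_mul continuous_const).intervalIntegrable _ _)
      (continuous_const.intervalIntegrable _ _),
      intervalIntegral.integral_mul_const, intervalIntegral.integral_const]
    norm_num
    ring
  have hQ := DeltaP_sq_int_le m
  have hbound : (∫ y in (-1:ℝ)..1, (legendreP (m+2) y - legendreP m y)^2) * (1/(2*t)) + t
      ≤ 4 / s := by
    have h1 : (0:ℝ) < 1/(2*t) := by positivity
    have h2 : (∫ y in (-1:ℝ)..1, (legendreP (m+2) y - legendreP m y)^2) * (1/(2*t))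
        ≤ (8 / (2*(m:ℝ)+1)) * (1/(2*t)) := by
      apply mul_le_mul_of_nonneg_right hQ h1.le
    have h3 : (8 / (2*(m:ℝ)+1)) * (1/(2*t)) + t = 4 / s := by
      rw [ht, ← hssq]
      field_simp
      ring
    linarith
  linarith

end LegAux

namespace LegAux

variable {K : ℕ} {b : ℕ → ℝ} {G : ℕ → ℝ → ℝ} {L : ℝ}

lemma b_mono (hbmono : ∀ i ≤ K, b i < b (i + 1)) :
    ∀ j, j ≤ K + 1 → ∀ i, i ≤ j → b i ≤ b j := by
  intro j
  induction j with
  | zero => intro _ i hi; interval_cases i; exact le_refl _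
  | succ j ih =>
    intro hj i hi
    rcases Nat.lt_or_ge i (j+1) with h | h
    · exact le_trans (ih (by omega) i (by omega)) (hbmono j (by omega)).le
    · have : i = j + 1 := by omega
      rw [this]

lemma b_mem (hb0 : b 0 = -1) (hbK : b (K + 1) = 1)
    (hbmono : ∀ i ≤ K, b i < b (i + 1)) :
    ∀ i ≤ K + 1, -1 ≤ b i ∧ b i ≤ 1 := by
  intro i hi
  constructor
  · rw [← hb0]; exact b_mono hbmono i hi 0 (by omega)
  · rw [← hbK]; exact b_mono hbmono (K+1) (le_refl _) i hi

lemma jumpSum_nonneg : 0 ≤ jumpSum K b G :=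
  Finset.sum_nonneg fun i _ => abs_nonneg _

lemma abs_Bterm_le (hb0 : b 0 = -1) (hbK : b (K + 1) = 1)
    (hbmono : ∀ i ≤ K, b i < b (i + 1)) (n : ℕ) :
    |Bterm K b G n| ≤ jumpSum K b G / Real.sqrt (2*(n:ℝ)+1) := by
  set s : ℝ := Real.sqrt (2*(n:ℝ)+1) with hs
  have hs0 : 0 < s := Real.sqrt_pos.mpr (by positivity)
  rw [Bterm, abs_mul]
  have habs1 : |(1 / (2 * s))| = 1/(2*s) := abs_of_pos (by positivity)
  rw [habs1]
  have hsum : |∑ i ∈ Finset.Icc 1 K, (G (i - 1) (b i) - G i (b i)) *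
        (legendreP (n + 1) (b i) - legendreP (n - 1) (b i))|
      ≤ 2 * jumpSum K b G := by
    calc |∑ i ∈ Finset.Icc 1 K, (G (i - 1) (b i) - G i (b i)) *
            (legendreP (n + 1) (b i) - legendreP (n - 1) (b i))|
        ≤ ∑ i ∈ Finset.Icc 1 K, |(G (i - 1) (b i) - G i (b i)) *
            (legendreP (n + 1) (b i) - legendreP (n - 1) (b i))| :=
          Finset.abs_sum_le_sum_abs _ _
      _ ≤ ∑ i ∈ Finset.Icc 1 K, 2 * |G i (b i) - G (i - 1) (b i)| := by
          apply Finset.sum_le_sum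
          intro i hi
          simp only [Finset.mem_Icc] at hi
          have hbi := b_mem hb0 hbK hbmono i (by omega)
          have h1 := abs_legendreP_le_one (n+1) hbi.1 hbi.2
          have h2 := abs_legendreP_le_one (n-1) hbi.1 hbi.2
          rw [abs_mul, abs_sub_comm (G (i-1) (b i))]
          have hd : |legendreP (n + 1) (b i) - legendreP (n - 1) (b i)| ≤ 2 := by
            calc |legendreP (n + 1) (b i) - legendreP (n - 1) (b i)|
                ≤ |legendreP (n + 1) (b i)| + |legendreP (n - 1) (b i)| := abs_sub _ _
              _ ≤ 2 := by linarith
          calc |G i (b i) - G (i-1) (b i)| * |legendreP (n + 1) (b i) - legendreP (n - 1) (b i)|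
              ≤ |G i (b i) - G (i-1) (b i)| * 2 :=
                mul_le_mul_of_nonneg_left hd (abs_nonneg _)
            _ = 2 * |G i (b i) - G (i-1) (b i)| := by ring
      _ = 2 * jumpSum K b G := by rw [jumpSum, Finset.mul_sum]
  calc 1/(2*s) * |∑ i ∈ Finset.Icc 1 K, (G (i - 1) (b i) - G i (b i)) *
          (legendreP (n + 1) (b i) - legendreP (n - 1) (b i))|
      ≤ 1/(2*s) * (2 * jumpSum K b G) := by
        apply mul_le_mul_of_nonneg_left hsum (by positivity)
    _ = jumpSum K b G / s := by field_simp
end LegAux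

namespace LegAux

lemma abs_Aterm_le (hb0 : b 0 = -1) (hbK : b (K + 1) = 1)
    (hbmono : ∀ i ≤ K, b i < b (i + 1)) (hL : 0 ≤ L)
    (hG : ∀ i ≤ K, ContDiffOn ℝ 1 (G i) (Set.Icc (b i) (b (i + 1))))
    (hGder : ∀ i ≤ K, ∀ y ∈ Set.Icc (b i) (b (i + 1)),
      |derivWithin (G i) (Set.Icc (b i) (b (i + 1))) y| ≤ L)
    (n : ℕ) (hn : 1 ≤ n) :
    |Aterm K b G n| ≤ 2*((K:ℝ)+1)*L
      / (Real.sqrt (2*(n:ℝ)+1) * Real.sqrt (2*(n:ℝ)-1)) := by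
  obtain ⟨m, rfl⟩ : ∃ m, n = m + 1 := ⟨n - 1, by omega⟩
  set s : ℝ := Real.sqrt (2*((m+1:ℕ):ℝ)+1) with hs
  have hs0 : 0 < s := Real.sqrt_pos.mpr (by positivity)
  have hr_eq : 2*((m+1:ℕ):ℝ)-1 = 2*(m:ℝ)+1 := by push_cast; ring
  set r : ℝ := Real.sqrt (2*((m+1:ℕ):ℝ)-1) with hr
  have hr_eq2 : r = Real.sqrt (2*(m:ℝ)+1) := by rw [hr, hr_eq]
  have hr0 : 0 < r := by rw [hr_eq2]; exact Real.sqrt_pos.mpr (by positivity)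
  rw [Aterm, show m+1+1 = m+2 from rfl, show m+1-1 = m from rfl]
  rw [abs_mul, abs_neg]
  have habs1 : |(1 : ℝ) / (2 * s)| = 1/(2*s) := abs_of_pos (by positivity)
  rw [habs1]
  have hterm : ∀ i ∈ Finset.range (K+1),
      |∫ y in (b i)..(b (i + 1)),
        derivWithin (G i) (Set.Icc (b i) (b (i + 1))) y *
          (legendreP (m+2) y - legendreP m y)| ≤ L * (4 / r) := by
    intro i hiR
    have hi : i ≤ K := by simp only [Finset.mem_range] at hiR; omega
    have hlt := hbmono i hi
    have hle := hlt.le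
    have hm1 := (b_mem hb0 hbK hbmono i (by omega)).1
    have hm2 := (b_mem hb0 hbK hbmono (i+1) (by omega)).2
    have hcontG' : ContinuousOn (derivWithin (G i) (Set.Icc (b i) (b (i + 1))))
        (Set.Icc (b i) (b (i + 1))) :=
      (hG i hi).continuousOn_derivWithin (uniqueDiffOn_Icc hlt) le_rfl
    have hcontProd : ContinuousOn (fun y => derivWithin (G i) (Set.Icc (b i) (b (i + 1))) y *
        (legendreP (m+2) y - legendreP m y)) (Set.Icc (b i) (b (i + 1))) :=
      hcontG'.mul (contDelta m).continuousOn
    have hint1 : IntervalIntegrable (fun y => derivWithin (G i) (Set.Icc (b i) (b (i + 1))) y *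
        (legendreP (m+2) y - legendreP m y)) volume (b i) (b (i+1)) := by
      apply ContinuousOn.intervalIntegrable
      rwa [Set.uIcc_of_le hle]
    have hintAbs : IntervalIntegrable (fun y => |derivWithin (G i) (Set.Icc (b i) (b (i + 1))) y *
        (legendreP (m+2) y - legendreP m y)|) volume (b i) (b (i+1)) := by
      apply ContinuousOn.intervalIntegrable
      rw [Set.uIcc_of_le hle]
      exact hcontProd.abs
    have hintL : IntervalIntegrable (fun y => L * |legendreP (m+2) y - legendreP m y|)
        volume (b i) (b (i+1)) :=
      (continuous_const.mul (contDelta m).abs).intervalIntegrable _ _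
    have step1 : |∫ y in (b i)..(b (i + 1)),
          derivWithin (G i) (Set.Icc (b i) (b (i + 1))) y *
            (legendreP (m+2) y - legendreP m y)|
        ≤ ∫ y in (b i)..(b (i + 1)), |derivWithin (G i) (Set.Icc (b i) (b (i + 1))) y *
            (legendreP (m+2) y - legendreP m y)| :=
      intervalIntegral.abs_integral_le_integral_abs hle
    have step2 : (∫ y in (b i)..(b (i + 1)), |derivWithin (G i) (Set.Icc (b i) (b (i + 1))) y *
          (legendreP (m+2) y - legendreP m y)|)
        ≤ ∫ y in (b i)..(b (i + 1)), L * |legendreP (m+2) y - legendreP m y| := by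
      apply intervalIntegral.integral_mono_on hle hintAbs hintL
      intro x hx
      rw [abs_mul]
      exact mul_le_mul_of_nonneg_right (hGder i hi x hx) (abs_nonneg _)
    have step3 : (∫ y in (b i)..(b (i + 1)), L * |legendreP (m+2) y - legendreP m y|)
        = L * ∫ y in (b i)..(b (i + 1)), |legendreP (m+2) y - legendreP m y| :=
      intervalIntegral.integral_const_mul _ _
    have step4 : (∫ y in (b i)..(b (i + 1)), |legendreP (m+2) y - legendreP m y|)
        ≤ ∫ y in (-1:ℝ)..1, |legendreP (m+2) y - legendreP m y| := by
      apply intervalIntegral.integral_mono_interval hm1 hle hm2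
      · exact ae_of_all _ (fun y => abs_nonneg _)
      · exact (contDelta m).abs.intervalIntegrable _ _
    have step5 := DeltaP_abs_int_le m
    calc |∫ y in (b i)..(b (i + 1)),
          derivWithin (G i) (Set.Icc (b i) (b (i + 1))) y *
            (legendreP (m+2) y - legendreP m y)|
        ≤ ∫ y in (b i)..(b (i + 1)), |derivWithin (G i) (Set.Icc (b i) (b (i + 1))) y *
            (legendreP (m+2) y - legendreP m y)| := step1
      _ ≤ ∫ y in (b i)..(b (i + 1)), L * |legendreP (m+2) y - legendreP m y| := step2
      _ = L * ∫ y in (b i)..(b (i + 1)), |legendreP (m+2) y - legendreP m y| := step3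
      _ ≤ L * ∫ y in (-1:ℝ)..1, |legendreP (m+2) y - legendreP m y| :=
          mul_le_mul_of_nonneg_left step4 hL
      _ ≤ L * (4 / Real.sqrt (2*(m:ℝ)+1)) := mul_le_mul_of_nonneg_left step5 hL
      _ = L * (4 / r) := by rw [hr_eq2]
  have hsum : |∑ i ∈ Finset.range (K + 1),
      ∫ y in (b i)..(b (i + 1)),
        derivWithin (G i) (Set.Icc (b i) (b (i + 1))) y *
          (legendreP (m+2) y - legendreP m y)|
      ≤ ((K:ℝ)+1) * (L * (4/r)) := by
    calc |∑ i ∈ Finset.range (K + 1),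
        ∫ y in (b i)..(b (i + 1)),
          derivWithin (G i) (Set.Icc (b i) (b (i + 1))) y *
            (legendreP (m+2) y - legendreP m y)|
        ≤ ∑ i ∈ Finset.range (K + 1), |∫ y in (b i)..(b (i + 1)),
            derivWithin (G i) (Set.Icc (b i) (b (i + 1))) y *
              (legendreP (m+2) y - legendreP m y)| := Finset.abs_sum_le_sum_abs _ _
      _ ≤ ∑ _i ∈ Finset.range (K + 1), L * (4/r) := Finset.sum_le_sum hterm
      _ = ((K:ℝ)+1) * (L * (4/r)) := by
          rw [Finset.sum_const, Finset.card_range, nsmul_eq_mul]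
          push_cast
          ring
  calc 1/(2*s) * |∑ i ∈ Finset.range (K + 1),
      ∫ y in (b i)..(b (i + 1)),
        derivWithin (G i) (Set.Icc (b i) (b (i + 1))) y *
          (legendreP (m+2) y - legendreP m y)|
      ≤ 1/(2*s) * (((K:ℝ)+1) * (L * (4/r))) :=
        mul_le_mul_of_nonneg_left hsum (by positivity)
    _ = 2*((K:ℝ)+1)*L / (s * r) := by field_simp; ring

end LegAux

namespace LegAux

lemma scalar_ineq (n : ℕ) (hn : 1 ≤ n) :
    2 / ((Real.sqrt (2*(n:ℝ)+1) * Real.sqrt (2*(n:ℝ)-1)) * Real.sqrt (2*(n:ℝ)+1))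
      ≤ Real.sqrt 2 * ((n:ℝ))^(-(3/2) : ℝ) := by
  have hx1 : (1:ℝ) ≤ (n:ℝ) := by exact_mod_cast hn
  have hx0 : (0:ℝ) < (n:ℝ) := by linarith
  set x : ℝ := (n:ℝ)
  set s : ℝ := Real.sqrt (2*x+1) with hsdef
  set r : ℝ := Real.sqrt (2*x-1) with hrdef
  set u : ℝ := Real.sqrt x with hudef
  set w : ℝ := Real.sqrt 2 with hwdef
  have hs0 : 0 < s := Real.sqrt_pos.mpr (by linarith)
  have hr0 : 0 < r := Real.sqrt_pos.mpr (by linarith)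
  have hu0 : 0 < u := Real.sqrt_pos.mpr hx0
  have hw0 : 0 < w := Real.sqrt_pos.mpr (by norm_num)
  have hss : s * s = 2*x+1 := Real.mul_self_sqrt (by linarith)
  have huu : u * u = x := Real.mul_self_sqrt hx0.le
  have hrpow : x ^ (-(3/2) : ℝ) = (x * u)⁻¹ := by
    rw [Real.rpow_neg hx0.le]
    congr 1
    rw [show (3/2 : ℝ) = 1 + 1/2 by norm_num, Real.rpow_add hx0, Real.rpow_one,
      ← Real.sqrt_eq_rpow]
  rw [hrpow]
  rw [div_le_iff₀ (by positivity)]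
  have hru : u ≤ r := by
    rw [hudef, hrdef]
    exact Real.sqrt_le_sqrt (by linarith)
  have hw1 : 1 ≤ w := by
    rw [hwdef, show (1:ℝ) = Real.sqrt 1 from Real.sqrt_one.symm]
    exact Real.sqrt_le_sqrt (by norm_num)
  have hchain : 2 * (x * u) ≤ w * ((2*x+1) * r) := by
    have c1 : 2 * (x * u) ≤ (2*x+1) * u := by nlinarith
    have c2 : (2*x+1) * u ≤ (2*x+1) * r :=
      mul_le_mul_of_nonneg_left hru (by linarith)
    have c3 : (2*x+1) * r ≤ w * ((2*x+1) * r) :=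
      le_mul_of_one_le_left (by positivity) hw1
    linarith
  have hxu0 : 0 < x * u := by positivity
  have hgoal : w * (x*u)⁻¹ * (s * r * s) = w * ((2*x+1) * r) * (x*u)⁻¹ := by
    rw [← hss]
    ring
  rw [hgoal]
  calc (2:ℝ) = 2 * (x*u) * (x*u)⁻¹ := by field_simp
    _ ≤ w * ((2*x+1) * r) * (x*u)⁻¹ := by
        apply mul_le_mul_of_nonneg_right hchain (by positivity)

end LegAux

/-- bound on the cross terms, together with the comparison
Σ_{n=N}^∞ (2n-1)^(-3/2) ≤ ζ(3/2, N). -/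
theorem tsum_abs_Aterm_mul_abs_Bterm_le
    (K : ℕ) (b : ℕ → ℝ) (L : ℝ) (G : ℕ → ℝ → ℝ) (g : ℝ → ℝ)
    (hb0 : b 0 = -1) (hbK : b (K + 1) = 1)
    (hbmono : ∀ i ≤ K, b i < b (i + 1))
    (hL : 0 ≤ L)
    (hG : ∀ i ≤ K, ContDiffOn ℝ 1 (G i) (Set.Icc (b i) (b (i + 1))))
    (hGder : ∀ i ≤ K, ∀ y ∈ Set.Icc (b i) (b (i + 1)),
      |derivWithin (G i) (Set.Icc (b i) (b (i + 1))) y| ≤ L)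
    (hg1 : ∀ i < K, ∀ y, b i ≤ y → y < b (i + 1) → g y = G i y)
    (hg2 : ∀ y ∈ Set.Icc (b K) (b (K + 1)), g y = G K y)
    (N : ℕ) (hN : 1 ≤ N) :
    (∑' k : ℕ, |Aterm K b G (N + k)| * |Bterm K b G (N + k)|) ≤
        Real.sqrt 2 * L * ((K : ℝ) + 1) * jumpSum K b G * hzeta (3 / 2) N ∧
      (∑' k : ℕ, (2 * ((N : ℝ) + (k : ℝ)) - 1) ^ (-(3 / 2) : ℝ)) ≤ hzeta (3 / 2) N := by
  have hN1 : (1:ℝ) ≤ (N:ℝ) := by exact_mod_cast hN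
  have hS0 : 0 ≤ jumpSum K b G := LegAux.jumpSum_nonneg
  have hzeq : hzeta (3/2) (N:ℝ) = ∑' k : ℕ, ((k:ℝ) + (N:ℝ)) ^ (-(3/2) : ℝ) := rfl
  have hsum0 : Summable (fun k : ℕ => ((k:ℝ) + (N:ℝ)) ^ (-(3/2) : ℝ)) := by
    have h0 : Summable (fun n : ℕ => ((n:ℝ)) ^ (-(3/2) : ℝ)) :=
      Real.summable_nat_rpow.mpr (by norm_num)
    have h1 : Summable (fun k : ℕ => (((k + N : ℕ)):ℝ) ^ (-(3/2) : ℝ)) :=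
      (summable_nat_add_iff N).mpr h0
    apply h1.congr
    intro k
    congr 1
    push_cast
    ring
  set C : ℝ := Real.sqrt 2 * L * ((K:ℝ)+1) * jumpSum K b G with hC
  have hC0 : 0 ≤ C :=
    mul_nonneg (mul_nonneg (mul_nonneg (Real.sqrt_nonneg 2) hL) (by positivity)) hS0
  have hconv : ∀ k : ℕ, (((N + k : ℕ)):ℝ) ^ (-(3/2) : ℝ) = ((k:ℝ) + (N:ℝ)) ^ (-(3/2) : ℝ) := by
    intro k; congr 1; push_cast; ring
  have key : ∀ k : ℕ, |Aterm K b G (N + k)| * |Bterm K b G (N + k)|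
      ≤ C * (((k:ℝ) + (N:ℝ)) ^ (-(3/2) : ℝ)) := by
    intro k
    have hn : 1 ≤ N + k := by omega
    have hnk1 : (1:ℝ) ≤ ((N+k:ℕ):ℝ) := by
      push_cast; linarith [Nat.cast_nonneg (α := ℝ) k]
    have hA := LegAux.abs_Aterm_le hb0 hbK hbmono hL hG hGder (N+k) hn
    have hB := LegAux.abs_Bterm_le (G := G) hb0 hbK hbmono (N+k)
    set s : ℝ := Real.sqrt (2*((N+k:ℕ):ℝ)+1) with hsd
    set r : ℝ := Real.sqrt (2*((N+k:ℕ):ℝ)-1) with hrd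
    have hs0 : 0 < s := Real.sqrt_pos.mpr (by linarith)
    have hr0 : 0 < r := Real.sqrt_pos.mpr (by linarith)
    have hAB : |Aterm K b G (N + k)| * |Bterm K b G (N + k)|
        ≤ (2*((K:ℝ)+1)*L / (s * r)) * (jumpSum K b G / s) := by
      apply mul_le_mul hA hB (abs_nonneg _) (by positivity)
    have heq : (2*((K:ℝ)+1)*L / (s * r)) * (jumpSum K b G / s)
        = (((K:ℝ)+1) * L * jumpSum K b G) * (2 / ((s * r) * s)) := by
      field_simp
    have hscalar := LegAux.scalar_ineq (N+k) hn
    have hstep : (((K:ℝ)+1) * L * jumpSum K b G) * (2 / ((s * r) * s))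
        ≤ (((K:ℝ)+1) * L * jumpSum K b G) * (Real.sqrt 2 * (((N+k:ℕ):ℝ)) ^ (-(3/2) : ℝ)) := by
      apply mul_le_mul_of_nonneg_left hscalar
        (mul_nonneg (mul_nonneg (by positivity) hL) hS0)
    have hfin : (((K:ℝ)+1) * L * jumpSum K b G) * (Real.sqrt 2 * (((N+k:ℕ):ℝ)) ^ (-(3/2) : ℝ))
        = C * (((k:ℝ) + (N:ℝ)) ^ (-(3/2) : ℝ)) := by
      rw [← hconv k, hC]; ring
    linarith [hAB, heq.le, heq.ge, hstep, hfin.le, hfin.ge]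
  have hsumC : Summable (fun k : ℕ => C * (((k:ℝ) + (N:ℝ)) ^ (-(3/2) : ℝ))) :=
    hsum0.mul_left C
  have hsumL : Summable (fun k : ℕ => |Aterm K b G (N + k)| * |Bterm K b G (N + k)|) :=
    Summable.of_nonneg_of_le (fun k => mul_nonneg (abs_nonneg _) (abs_nonneg _)) key hsumC
  constructor
  · calc (∑' k : ℕ, |Aterm K b G (N + k)| * |Bterm K b G (N + k)|)
        ≤ ∑' k : ℕ, C * (((k:ℝ) + (N:ℝ)) ^ (-(3/2) : ℝ)) := hsumL.tsum_le_tsum key hsumC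
      _ = C * ∑' k : ℕ, (((k:ℝ) + (N:ℝ)) ^ (-(3/2) : ℝ)) := tsum_mul_left
      _ = Real.sqrt 2 * L * ((K : ℝ) + 1) * jumpSum K b G * hzeta (3 / 2) N := by
          rw [hzeq, hC]
  · have hterm2 : ∀ k : ℕ, (2 * ((N : ℝ) + (k : ℝ)) - 1) ^ (-(3 / 2) : ℝ)
        ≤ ((k:ℝ) + (N:ℝ)) ^ (-(3/2) : ℝ) := by
      intro k
      have hk0 : (0:ℝ) ≤ (k:ℝ) := Nat.cast_nonneg k
      have h1 : (0:ℝ) < (k:ℝ) + (N:ℝ) := by linarith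
      have h2 : (k:ℝ) + (N:ℝ) ≤ 2 * ((N : ℝ) + (k : ℝ)) - 1 := by linarith
      exact Real.antitoneOn_rpow_Ioi_of_exponent_nonpos (by norm_num)
        (Set.mem_Ioi.mpr h1) (Set.mem_Ioi.mpr (by linarith)) h2
    have hsumL2 : Summable (fun k : ℕ => (2 * ((N : ℝ) + (k : ℝ)) - 1) ^ (-(3 / 2) : ℝ)) :=
      Summable.of_nonneg_of_le
        (fun k => Real.rpow_nonneg (by
          have hk0 : (0:ℝ) ≤ (k:ℝ) := Nat.cast_nonneg k
          linarith) _) hterm2 hsum0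
    rw [hzeq]
    exact hsumL2.tsum_le_tsum hterm2 hsum0
end
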